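/- arXiv:1705.07686 — 4 statements merged into one kernel-verified Lean document; each statement's English description precedes it below -/
import Mathlib

section
/- Let S be a linear schema, l a label, and ρ, ρ' paths through S such that ρ is l-reducible to ρ'. Then (1) the sequence of function and predicate symbols through which ρ' passes is a subsequence of the sequence of function and predicate symbols through which ρ passes, (2) ρ and ρ' contain the same number of occurrences of the letter l, and (3) the length of ρ' is at most the length of ρ. -/
namespace SchemaSlicing

/- Function symbols, predicate symbols, variables and labels are drawn from
   fixed infinite sets; we model each by ℕ. Arities are implicit: each
   occurrence of a symbol carries the list of its arguments. -/
abbrev Var := ℕ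
abbrev Fn := ℕ
abbrev Pn := ℕ
abbrev Label := ℕ

/-- Structured program schemas. `loop` is the while-construct. -/
inductive Schema : Type where
  | skip : Schema
  | label : Label → Schema
  | assign : Var → Fn → List Var → Schema
  | seq : Schema → Schema → Schema
  | ite : Pn → List Var → Schema → Schema → Schema
  | loop : Pn → List Var → Schema → Schema
  deriving DecidableEq

/-- Letters of the alphabet L(S): labels, assignment letters ⟨y:=f(x)⟩ and
    predicate letters ⟨p(x),Z⟩. -/
inductive Letter : Type where
  | lab : Label → Letter
  | asgn : Var → Fn → List Var → Letter
  | pred : Pn → List Var → Bool → Letter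
  deriving DecidableEq

/-- Symbols: function symbols, predicate symbols and labels. -/
inductive Sym : Type where
  | fn : Fn → Sym
  | pn : Pn → Sym
  | lab : Label → Sym
  deriving DecidableEq

/-- The list of occurrences of function symbols, predicate symbols and labels in a schema. -/
def Schema.syms : Schema → List Sym
  | .skip => []
  | .label l => [Sym.lab l]
  | .assign _ f _ => [Sym.fn f]
  | .seq S₁ S₂ => S₁.syms ++ S₂.syms
  | .ite p _ S₁ S₂ => Sym.pn p :: (S₁.syms ++ S₂.syms)
  | .loop q _ T => Sym.pn q :: T.syms

/-- A schema is linear if no function symbol, predicate symbol or label occurs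
    more than once in it. -/
def Schema.Linear (S : Schema) : Prop := S.syms.Nodup

/-- Π(S), the set of terminating paths through S. -/
inductive Paths : Schema → List Letter → Prop where
  | skip : Paths Schema.skip []
  | label (l : Label) : Paths (Schema.label l) [Letter.lab l]
  | assign (y : Var) (f : Fn) (xs : List Var) :
      Paths (Schema.assign y f xs) [Letter.asgn y f xs]
  | seq {S₁ S₂ w₁ w₂} : Paths S₁ w₁ → Paths S₂ w₂ → Paths (Schema.seq S₁ S₂) (w₁ ++ w₂)
  | iteTrue {p xs S₁ S₂ w} : Paths S₁ w →
      Paths (Schema.ite p xs S₁ S₂) (Letter.pred p xs true :: w)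
  | iteFalse {p xs S₁ S₂ w} : Paths S₂ w →
      Paths (Schema.ite p xs S₁ S₂) (Letter.pred p xs false :: w)
  | loopFalse (q : Pn) (xs : List Var) (T : Schema) :
      Paths (Schema.loop q xs T) [Letter.pred q xs false]
  | loopTrue {q xs T w ws} : Paths T w → Paths (Schema.loop q xs T) ws →
      Paths (Schema.loop q xs T) (Letter.pred q xs true :: (w ++ ws))

/-- ρ ∈ pre(Π(S)): ρ is a (finite) path through S.  (Every finite path through S,
    including every finite prefix of an infinite path, is a prefix of a terminating path.) -/
def PathPrefix (S : Schema) (ρ : List Letter) : Prop := ∃ τ, Paths S τ ∧ ρ <+: τ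

/-- `IsQuotient S' S`: S' is obtained from S by deleting zero or more statements. -/
inductive IsQuotient : Schema → Schema → Prop where
  | skip (S : Schema) : IsQuotient Schema.skip S
  | refl (S : Schema) : IsQuotient S S
  | seq {S₁' S₁ S₂' S₂} : IsQuotient S₁' S₁ → IsQuotient S₂' S₂ →
      IsQuotient (Schema.seq S₁' S₂') (Schema.seq S₁ S₂)
  | loop {q xs T' T} : IsQuotient T' T → IsQuotient (Schema.loop q xs T') (Schema.loop q xs T)
  | ite {p xs T₁ S₁ T₂ S₂} : IsQuotient T₁ S₁ → IsQuotient T₂ S₂ →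
      IsQuotient (Schema.ite p xs T₁ T₂) (Schema.ite p xs S₁ S₂)

/-- The symbol (function symbol, predicate symbol or label) of a letter. -/
def Letter.sym : Letter → Sym
  | .lab l => Sym.lab l
  | .asgn _ f _ => Sym.fn f
  | .pred p _ _ => Sym.pn p

/-- proj_{S'}(ρ): delete from ρ all letters whose function or predicate symbols,
    or labels, do not occur in S'. -/
def proj (S' : Schema) (ρ : List Letter) : List Letter :=
  ρ.filter (fun m => decide (m.sym ∈ S'.syms))

/-- An interpretation over a domain D. -/
structure Interp (D : Type) where
  fn : Fn → List D → D
  pn : Pn → List D → Bool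

/-- One execution step on (non-⊥) states; predicate letters and labels do not change the state. -/
def execLetter {D : Type} (i : Interp D) (d : Var → D) : Letter → (Var → D)
  | .asgn y f xs => Function.update d y (i.fn f (xs.map d))
  | _ => d

/-- M[schema(σ)]^i_d : the state after executing the assignments of the word σ from d. -/
def execWord {D : Type} (i : Interp D) (d : Var → D) (σ : List Letter) : Var → D :=
  σ.foldl (execLetter i) d

/-- ρ is consistent with (i,d): every predicate letter in ρ is evaluated by i in accordance
    with the sequence of assignments preceding it. -/
def Consistent {D : Type} (i : Interp D) (d : Var → D) (ρ : List Letter) : Prop :=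
  ∀ σ p xs Z, (σ ++ [Letter.pred p xs Z]) <+: ρ → i.pn p (xs.map (execWord i d σ)) = Z

/-- `ρ` is a finite prefix of the path π(S,i,d). -/
def PrefixOfPi {D : Type} (i : Interp D) (d : Var → D) (S : Schema) (ρ : List Letter) : Prop :=
  PathPrefix S ρ ∧ Consistent i d ρ

/-- The set of finite prefixes of π(S,i,d); this set determines the
    (possibly infinite) word π(S,i,d) uniquely. -/
def PiPrefixes {D : Type} (i : Interp D) (d : Var → D) (S : Schema) : Set (List Letter) :=
  {ρ | PrefixOfPi i d S ρ}

open Classical in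
/-- The final state M[S]^i_d; `none` represents ⊥ (non-termination). -/
noncomputable def finalState {D : Type} (i : Interp D) (d : Var → D) (S : Schema) :
    Option (Var → D) :=
  if h : ∃ ρ, Paths S ρ ∧ Consistent i d ρ then some (execWord i d h.choose) else none

/-- The Herbrand domain Term(F,V). -/
inductive Tm : Type where
  | var : Var → Tm
  | app : Fn → List Tm → Tm

/-- A Herbrand interpretation: function symbols act as term constructors. -/
def Interp.IsHerbrand (j : Interp Tm) : Prop := ∀ f ts, j.fn f ts = Tm.app f ts

/-- The natural state e. -/
def natState : Var → Tm := Tm.var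

/-- A fixed Herbrand interpretation (the predicate part is irrelevant for executing
    assignments). -/
def hInterp : Interp Tm := ⟨fun f ts => Tm.app f ts, fun _ _ => true⟩

/-- M[σ]_e : the Herbrand state after executing the assignments of σ from the natural state. -/
def hExec (σ : List Letter) : Var → Tm := execWord hInterp natState σ

/-- p(t) = Y is a consequence of μ. -/
def Consequence (μ : List Letter) (p : Pn) (ts : List Tm) (Y : Bool) : Prop :=
  ∃ μ' xs, (μ' ++ [Letter.pred p xs Y]) <+: μ ∧ xs.map (hExec μ') = ts

/-- ρ is executable: ρ is a prefix of π(S,i,d) for some domain, interpretation and state. -/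
def Executable (S : Schema) (ρ : List Letter) : Prop :=
  ∃ (D : Type) (i : Interp D) (d : Var → D), PrefixOfPi i d S ρ

/-- ρ (through S) and ρ' (through S') are compatible: for some domain, interpretation i
    and state d they are prefixes of π(S,i,d) and π(S',i,d) respectively. -/
def Compatible (S : Schema) (ρ : List Letter) (S' : Schema) (ρ' : List Letter) : Prop :=
  ∃ (D : Type) (i : Interp D) (d : Var → D), PrefixOfPi i d S ρ ∧ PrefixOfPi i d S' ρ'

/-- `Sub T S`: T occurs as a subschema of S. -/
inductive Sub : Schema → Schema → Prop where
  | refl (S : Schema) : Sub S S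
  | seqL {T S₁ S₂} : Sub T S₁ → Sub T (Schema.seq S₁ S₂)
  | seqR {T S₁ S₂} : Sub T S₂ → Sub T (Schema.seq S₁ S₂)
  | iteT {T p xs S₁ S₂} : Sub T S₁ → Sub T (Schema.ite p xs S₁ S₂)
  | iteF {T p xs S₁ S₂} : Sub T S₂ → Sub T (Schema.ite p xs S₁ S₂)
  | loop {T q xs B} : Sub T B → Sub T (Schema.loop q xs B)

/-- Simple l-reductions of paths through S. -/
inductive SimpleRed (S : Schema) (l : Label) : List Letter → List Letter → Prop where
  | loopRed {p xs B σ α γ} :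
      Sub (Schema.loop p xs B) S → Paths B σ → Sym.lab l ∉ B.syms →
      SimpleRed S l (α ++ [Letter.pred p xs true] ++ σ ++ [Letter.pred p xs false] ++ γ)
                    (α ++ [Letter.pred p xs false] ++ γ)
  | iteRed {p xs S₁ S₂ σ α γ} {Z : Bool} :
      Sub (Schema.ite p xs S₁ S₂) S → Paths (if Z then S₁ else S₂) σ →
      (if Z then S₂ else S₁) = Schema.skip →
      Sym.lab l ∉ S₁.syms → Sym.lab l ∉ S₂.syms →
      SimpleRed S l (α ++ [Letter.pred p xs Z] ++ σ ++ γ)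
                    (α ++ [Letter.pred p xs (!Z)] ++ γ)

/-- ρ is l-reducible to ρ': zero or more simple l-reductions. -/
def Reducible (S : Schema) (l : Label) : List Letter → List Letter → Prop :=
  Relation.ReflTransGen (SimpleRed S l)

/-- maxpre(σ,σ') : the maximal common prefix of two words. -/
def maxpre : List Letter → List Letter → List Letter
  | a :: as, b :: bs => if a = b then a :: maxpre as bs else []
  | _, _ => []

/-- The sequence of function and predicate symbols through which a path passes. -/
def symSeq (ρ : List Letter) : List Sym :=
  ρ.filterMap fun m => match m with
    | Letter.asgn _ f _ => some (Sym.fn f)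
    | Letter.pred p _ _ => some (Sym.pn p)
    | Letter.lab _ => none

/-- S' (a quotient of S containing l) is a (ρl,V)-path-faithful dynamic slice of S:
    (1) every variable of V defines the same term after proj_{S'}(ρ) as after ρ, and
    (2) every maximal path through S' compatible with ρ has proj_{S'}(ρ) as a prefix
        (equivalently: whenever ρ is a prefix of π(S,i,d), proj_{S'}(ρ) is a prefix
        of π(S',i,d)). -/
def IsPFDS (S : Schema) (ρ : List Letter) (l : Label) (V : Set Var) (S' : Schema) : Prop :=
  (∀ v ∈ V, hExec (proj S' ρ) v = hExec ρ v) ∧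
  ∀ (D : Type) (i : Interp D) (d : Var → D),
    PrefixOfPi i d S ρ → PrefixOfPi i d S' (proj S' ρ)

/-- S' (a quotient of S containing l) is a (ρl,V)-dynamic slice of S: every maximal path
    through S' compatible with ρ has a prefix ρ' to which proj_{S'}(ρ) is l-reducible and
    such that every variable of V defines the same term after ρ' as after ρ. -/
def IsDS (S : Schema) (ρ : List Letter) (l : Label) (V : Set Var) (S' : Schema) : Prop :=
  ∀ (D : Type) (i : Interp D) (d : Var → D), PrefixOfPi i d S ρ →
    ∃ ρ', PrefixOfPi i d S' ρ' ∧ Reducible S' l (proj S' ρ) ρ' ∧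
      ∀ v ∈ V, hExec ρ' v = hExec ρ v

/-- T' is a (ρ,V)-path-faithful dynamic end slice of T
    (S = T l with a label l at the end, S' = T' l). -/
def IsPFDSEnd (T : Schema) (ρ : List Letter) (V : Set Var) (T' : Schema) : Prop :=
  IsPFDS (Schema.seq T (Schema.label 0)) ρ 0 V (Schema.seq T' (Schema.label 0))

/-- T' is a (ρ,V)-dynamic end slice of T. -/
def IsDSEnd (T : Schema) (ρ : List Letter) (V : Set Var) (T' : Schema) : Prop :=
  IsDS (Schema.seq T (Schema.label 0)) ρ 0 V (Schema.seq T' (Schema.label 0))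

/-- The set of function and predicate symbols of a schema. -/
def fpsyms (T : Schema) : Set Sym := {s | s ∈ T.syms ∧ ∀ l : Label, s ≠ Sym.lab l}

/-- T is a minimal (ρ,V)-path-faithful dynamic end slice of S: it is a path-faithful
    dynamic end slice, and no quotient of S with a strictly smaller set of function and
    predicate symbols is a (ρ,V)-dynamic end slice of S. -/
def MinimalPFDSEnd (S : Schema) (ρ : List Letter) (V : Set Var) (T : Schema) : Prop :=
  IsPFDSEnd S ρ V T ∧
  ∀ T', IsQuotient T' S → fpsyms T' ⊂ fpsyms T → ¬ IsDSEnd S ρ V T'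

lemma mem_syms_of_paths {B : Schema} {σ : List Letter} (h : Paths B σ) :
    ∀ m ∈ σ, m.sym ∈ B.syms := by
  induction h with
  | skip => simp
  | label l => simp [Schema.syms, Letter.sym]
  | assign y f xs => simp [Schema.syms, Letter.sym]
  | seq _ _ ih₁ ih₂ =>
      intro m hm
      simp only [List.mem_append] at hm
      simp only [Schema.syms, List.mem_append]
      rcases hm with hm | hm
      · exact Or.inl (ih₁ m hm)
      · exact Or.inr (ih₂ m hm)
  | iteTrue _ ih =>
      intro m hm
      rcases List.mem_cons.1 hm with rfl | hm
      · simp [Schema.syms, Letter.sym]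
      · simp only [Schema.syms, List.mem_cons, List.mem_append]
        exact Or.inr (Or.inl (ih m hm))
  | iteFalse _ ih =>
      intro m hm
      rcases List.mem_cons.1 hm with rfl | hm
      · simp [Schema.syms, Letter.sym]
      · simp only [Schema.syms, List.mem_cons, List.mem_append]
        exact Or.inr (Or.inr (ih m hm))
  | loopFalse q xs T =>
      simp [Schema.syms, Letter.sym]
  | loopTrue _ _ ih₁ ih₂ =>
      intro m hm
      rcases List.mem_cons.1 hm with rfl | hm
      · simp [Schema.syms, Letter.sym]
      · simp only [List.mem_append] at hm
        simp only [Schema.syms, List.mem_cons]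
        rcases hm with hm | hm
        · exact Or.inr (ih₁ m hm)
        · simpa [Schema.syms] using ih₂ m hm

lemma count_lab_zero {B : Schema} {σ : List Letter} (h : Paths B σ) {l : Label}
    (hl : Sym.lab l ∉ B.syms) : σ.count (Letter.lab l) = 0 := by
  rw [List.count_eq_zero]
  intro hmem
  exact hl (mem_syms_of_paths h (Letter.lab l) hmem)

lemma simpleRed_props {S : Schema} {l : Label} {ρ ρ' : List Letter}
    (h : SimpleRed S l ρ ρ') :
    (symSeq ρ').Sublist (symSeq ρ) ∧
    ρ'.count (Letter.lab l) = ρ.count (Letter.lab l) ∧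
    ρ'.length ≤ ρ.length := by
  cases h with
  | @loopRed p xs B σ α γ _ hσ hl =>
      refine ⟨?_, ?_, ?_⟩
      · simp only [symSeq, List.filterMap_append, List.filterMap_cons, List.filterMap_nil,
          List.append_assoc]
        refine List.Sublist.append_left ?_ _
        refine List.Sublist.cons₂ _ ?_
        refine List.Sublist.trans (List.sublist_cons_self (Sym.pn p) _) ?_
        exact List.sublist_append_right _ _
      · simp [List.count_append, count_lab_zero hσ hl, List.count_cons]
      · simp only [List.length_append, List.length_cons, List.length_nil]
        omega
  | @iteRed p xs S₁ S₂ σ α γ Z _ hσ _ hl₁ hl₂ =>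
      refine ⟨?_, ?_, ?_⟩
      · simp only [symSeq, List.filterMap_append, List.filterMap_cons, List.filterMap_nil,
          List.append_assoc]
        refine List.Sublist.append_left ?_ _
        refine List.Sublist.cons₂ _ ?_
        exact List.sublist_append_right _ _
      · have hσ0 : σ.count (Letter.lab l) = 0 := by
          cases Z with
          | true => exact count_lab_zero (by simpa using hσ) hl₁
          | false => exact count_lab_zero (by simpa using hσ) hl₂
        simp [List.count_append, hσ0, List.count_cons]
      · simp only [List.length_append, List.length_cons, List.length_nil]
        omega

/-- if ρ is l-reducible to ρ' then (1) the sequence of function and predicate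
    symbols through which ρ' passes is a subsequence of that of ρ, (2) ρ and ρ' pass
    through the label l the same number of times, and (3) |ρ'| ≤ |ρ|. -/
theorem statement_9 (S : Schema) (hlin : S.Linear) (l : Label) (ρ ρ' : List Letter)
    (hρ : PathPrefix S ρ) (hρ' : PathPrefix S ρ') (h : Reducible S l ρ ρ') :
    (symSeq ρ').Sublist (symSeq ρ) ∧
    ρ'.count (Letter.lab l) = ρ.count (Letter.lab l) ∧
    ρ'.length ≤ ρ.length := by
  clear hlin hρ hρ'
  induction h with
  | refl => exact ⟨List.Sublist.refl _, rfl, le_refl _⟩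
  | tail _ hstep ih =>
      obtain ⟨s₁, c₁, len₁⟩ := ih
      obtain ⟨s₂, c₂, len₂⟩ := simpleRed_props hstep
      exact ⟨s₂.trans s₁, c₂.trans c₁, len₂.trans len₁⟩

end SchemaSlicing
end

section
/- Two paths ρ through a schema S and ρ' through a schema S' are compatible (i.e. for some domain D, interpretation i over D and state d : V → D, ρ is a prefix of π(S,i,d) and ρ' is a prefix of π(S',i,d)) if and only if there exists a Herbrand interpretation j such that ρ is a prefix of π(S,j,e) and ρ' is a prefix of π(S',j,e). In particular, a path ρ through S is executable if and only if ρ is a prefix of π(S,j,e) for some Herbrand interpretation j. -/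
namespace SchemaSlicing

/-- Evaluation of terms under an interpretation and a state. -/
def Tm.eval {D : Type} (i : Interp D) (d : Var → D) : Tm → D
  | .var v => d v
  | .app f ts => i.fn f (ts.attach.map fun ⟨t, _⟩ => Tm.eval i d t)

lemma Tm.eval_app {D : Type} (i : Interp D) (d : Var → D) (f : Fn) (ts : List Tm) :
    Tm.eval i d (Tm.app f ts) = i.fn f (ts.map (Tm.eval i d)) := by
  rw [Tm.eval]
  congr 1
  simp [List.attach_map_val]

lemma execLetter_eval {D : Type} (i : Interp D) (d : Var → D) (t : Var → Tm) (m : Letter) :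
    execLetter i (fun v => Tm.eval i d (t v)) m
      = fun v => Tm.eval i d (execLetter hInterp t m v) := by
  cases m with
  | asgn y f xs =>
    funext v
    simp only [execLetter, hInterp, Function.update]
    by_cases h : v = y
    · subst h
      simp [Tm.eval_app, List.map_map]
      rfl
    · simp [h]
  | lab l => rfl
  | pred p xs Z => rfl

lemma execWord_eval {D : Type} (i : Interp D) (d : Var → D) :
    ∀ (σ : List Letter) (t : Var → Tm),
      execWord i (fun v => Tm.eval i d (t v)) σ
        = fun v => Tm.eval i d (execWord hInterp t σ v) := by
  intro σ
  induction σ with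
  | nil => intro t; rfl
  | cons m σ ih =>
    intro t
    show execWord i (execLetter i (fun v => Tm.eval i d (t v)) m) σ = _
    rw [execLetter_eval i d t m, ih (execLetter hInterp t m)]
    rfl

lemma execWord_fn_eq {D : Type} (i i' : Interp D) (hfn : ∀ f xs, i.fn f xs = i'.fn f xs) :
    ∀ (σ : List Letter) (t : Var → D), execWord i t σ = execWord i' t σ := by
  intro σ
  induction σ with
  | nil => intro t; rfl
  | cons m σ ih =>
    intro t
    show execWord i (execLetter i t m) σ = execWord i' (execLetter i' t m) σ
    have : execLetter i t m = execLetter i' t m := by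
      cases m with
      | asgn y f xs => simp [execLetter, hfn]
      | lab l => rfl
      | pred p xs Z => rfl
    rw [this, ih]

lemma herbrandize {D : Type} (i : Interp D) (d : Var → D) :
    ∃ j : Interp Tm, j.IsHerbrand ∧
      ∀ ρ : List Letter, Consistent i d ρ → Consistent j natState ρ := by
  refine ⟨⟨fun f ts => Tm.app f ts, fun p ts => i.pn p (ts.map (Tm.eval i d))⟩,
    fun f ts => rfl, ?_⟩
  intro ρ hC σ p xs Z hpre
  have hfn : ∀ f ts, (⟨fun f ts => Tm.app f ts,
      fun p ts => i.pn p (ts.map (Tm.eval i d))⟩ : Interp Tm).fn f ts = hInterp.fn f ts :=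
    fun _ _ => rfl
  have h1 : execWord (⟨fun f ts => Tm.app f ts,
      fun p ts => i.pn p (ts.map (Tm.eval i d))⟩ : Interp Tm) natState σ
      = execWord hInterp natState σ := execWord_fn_eq _ _ hfn σ natState
  have h2 : (fun v => Tm.eval i d (natState v)) = d := funext fun v => by simp [natState, Tm.eval]
  have h3 : execWord i d σ = fun v => Tm.eval i d (execWord hInterp natState σ v) := by
    have := execWord_eval i d σ natState
    rw [h2] at this
    exact this
  show i.pn p ((xs.map _).map (Tm.eval i d)) = Z
  rw [h1, List.map_map]
  have := hC σ p xs Z hpre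
  rw [h3] at this
  exact this

/-- two paths ρ (through S) and ρ' (through S') are compatible iff there is
    a Herbrand interpretation j such that ρ is a prefix of π(S,j,e) and ρ' is a prefix of
    π(S',j,e); in particular ρ is executable iff ρ is a prefix of π(S,j,e) for some
    Herbrand interpretation j. -/
theorem statement_13 (S S' : Schema) (ρ ρ' : List Letter)
    (hρ : PathPrefix S ρ) (hρ' : PathPrefix S' ρ') :
    (Compatible S ρ S' ρ' ↔
      ∃ j : Interp Tm, j.IsHerbrand ∧
        PrefixOfPi j natState S ρ ∧ PrefixOfPi j natState S' ρ') ∧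
    (Executable S ρ ↔
      ∃ j : Interp Tm, j.IsHerbrand ∧ PrefixOfPi j natState S ρ) := by
  constructor
  · constructor
    · rintro ⟨D, i, d, ⟨_, hc⟩, ⟨_, hc'⟩⟩
      obtain ⟨j, hj, hcons⟩ := herbrandize i d
      exact ⟨j, hj, ⟨hρ, hcons ρ hc⟩, ⟨hρ', hcons ρ' hc'⟩⟩
    · rintro ⟨j, _, h1, h2⟩
      exact ⟨Tm, j, natState, h1, h2⟩
  · constructor
    · rintro ⟨D, i, d, ⟨_, hc⟩⟩
      obtain ⟨j, hj, hcons⟩ := herbrandize i d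
      exact ⟨j, hj, hρ, hcons ρ hc⟩
    · rintro ⟨j, _, h1⟩
      exact ⟨Tm, j, natState, h1⟩

end SchemaSlicing
end

section
/- Let S be a linear schema containing a label l, let ρl be an executable prefix of a terminating path through S, let V be a set of variables and let S' be a quotient of S containing l. Then S' is a (ρl,V)-dynamic slice of S if and only if there is no path τ through S' compatible with ρ, with τ either a terminating path through S' of length < |proj_{S'}(ρ)l| or a path of length exactly |proj_{S'}(ρ)l|, such that τ has no prefix of the form ρ'l where proj_{S'}(ρ) is l-reducible to ρ' and M[ρ']_e(v) = M[ρ]_e(v) for all v ∈ V. (Here one uses that every path ρ'l through S' with proj_{S'}(ρ) l-reducible to ρ' has length at most |proj_{S'}(ρ)l|.) -/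
namespace SchemaSlicing

/-! ### Auxiliary lemmas -/

section Aux

lemma sub_syms {T S : Schema} (h : Sub T S) : ∀ {s}, s ∈ T.syms → s ∈ S.syms := by
  induction h with
  | refl => exact fun h => h
  | seqL _ ih => intro s hs; exact List.mem_append_left _ (ih hs)
  | seqR _ ih => intro s hs; exact List.mem_append_right _ (ih hs)
  | iteT _ ih => intro s hs; exact List.mem_cons_of_mem _ (List.mem_append_left _ (ih hs))
  | iteF _ ih => intro s hs; exact List.mem_cons_of_mem _ (List.mem_append_right _ (ih hs))
  | loop _ ih => intro s hs; exact List.mem_cons_of_mem _ (ih hs)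

lemma paths_mem_syms {S : Schema} {τ : List Letter} (h : Paths S τ) :
    ∀ {m}, m ∈ τ → m.sym ∈ S.syms := by
  induction h with
  | skip => intro m hm; simp at hm
  | label l => intro m hm; simp at hm; subst hm; simp [Letter.sym, Schema.syms]
  | assign y f xs => intro m hm; simp at hm; subst hm; simp [Letter.sym, Schema.syms]
  | seq _ _ ih₁ ih₂ =>
      intro m hm
      rcases List.mem_append.1 hm with h | h
      · exact List.mem_append_left _ (ih₁ h)
      · exact List.mem_append_right _ (ih₂ h)
  | iteTrue _ ih =>
      intro m hm
      rcases List.mem_cons.1 hm with rfl | h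
      · simp [Letter.sym, Schema.syms]
      · exact List.mem_cons_of_mem _ (List.mem_append_left _ (ih h))
  | iteFalse _ ih =>
      intro m hm
      rcases List.mem_cons.1 hm with rfl | h
      · simp [Letter.sym, Schema.syms]
      · exact List.mem_cons_of_mem _ (List.mem_append_right _ (ih h))
  | loopFalse q xs T =>
      intro m hm; simp at hm; subst hm; simp [Letter.sym, Schema.syms]
  | loopTrue _ _ ih₁ ih₂ =>
      intro m hm
      rcases List.mem_cons.1 hm with rfl | h
      · simp [Letter.sym, Schema.syms]
      · rcases List.mem_append.1 h with h | h
        · exact List.mem_cons_of_mem _ (ih₁ h)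
        · exact ih₂ h

lemma quot_syms {S' S : Schema} (h : IsQuotient S' S) : List.Sublist S'.syms S.syms := by
  induction h with
  | skip S => exact List.nil_sublist _
  | refl S => exact List.Sublist.refl _
  | seq _ _ ih₁ ih₂ => exact List.Sublist.append ih₁ ih₂
  | loop _ ih => exact List.Sublist.cons₂ _ ih
  | ite _ _ ih₁ ih₂ => exact List.Sublist.cons₂ _ (List.Sublist.append ih₁ ih₂)

lemma paths_nonempty : ∀ S : Schema, ∃ τ, Paths S τ := by
  intro S
  induction S with
  | skip => exact ⟨_, Paths.skip⟩
  | label l => exact ⟨_, Paths.label l⟩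
  | assign y f xs => exact ⟨_, Paths.assign y f xs⟩
  | seq S₁ S₂ ih₁ ih₂ =>
      obtain ⟨w₁, h₁⟩ := ih₁; obtain ⟨w₂, h₂⟩ := ih₂; exact ⟨_, Paths.seq h₁ h₂⟩
  | ite p xs S₁ S₂ ih₁ ih₂ =>
      obtain ⟨w, h⟩ := ih₁; exact ⟨_, Paths.iteTrue h⟩
  | loop q xs T ih => exact ⟨_, Paths.loopFalse q xs T⟩

end Aux
section Aux2

lemma prefix_append_cases {γ : Type*} {l a b : List γ} (h : l <+: a ++ b) :
    l <+: a ∨ ∃ t, l = a ++ t ∧ t <+: b := by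
  rcases le_or_gt l.length a.length with hle | hlt
  · left
    exact List.prefix_of_prefix_length_le h (a.prefix_append b) hle
  · right
    have ha : a <+: l := List.prefix_of_prefix_length_le (a.prefix_append b) h (Nat.le_of_lt hlt)
    obtain ⟨t, rfl⟩ := ha
    refine ⟨t, rfl, ?_⟩
    obtain ⟨r, hr⟩ := h
    rw [List.append_assoc] at hr
    exact ⟨r, List.append_cancel_left hr⟩

lemma split_left {w₁ w₂ α rest : List Letter} {b : Letter}
    (h : w₁ ++ w₂ = α ++ b :: rest) (hlt : α.length < w₁.length) :
    ∃ rest₁, w₁ = α ++ b :: rest₁ ∧ rest = rest₁ ++ w₂ := by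
  have hα : α <+: w₁ := by
    refine List.prefix_of_prefix_length_le ?_ (w₁.prefix_append w₂) (Nat.le_of_lt hlt)
    rw [h]; exact α.prefix_append _
  obtain ⟨k, rfl⟩ := hα
  match k, hlt with
  | x :: k', _ =>
    rw [List.append_assoc, List.cons_append] at h
    have h' := List.append_cancel_left h
    injection h' with h₁ h₂
    exact ⟨k', by rw [h₁], h₂.symm⟩
  | [], hlt => simp at hlt

lemma split_right {w₁ w₂ α rest : List Letter} {b : Letter}
    (h : w₁ ++ w₂ = α ++ b :: rest) (hge : w₁.length ≤ α.length) :
    ∃ α₂, α = w₁ ++ α₂ ∧ w₂ = α₂ ++ b :: rest := by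
  have hw : w₁ <+: α := by
    refine List.prefix_of_prefix_length_le (w₁.prefix_append w₂) ?_ hge
    rw [h]; exact α.prefix_append _
  obtain ⟨α₂, rfl⟩ := hw
  rw [List.append_assoc] at h
  exact ⟨α₂, rfl, List.append_cancel_left h⟩

/-- Two terminating paths through the same schema are equal or first diverge at a
    predicate letter with opposite values. -/
theorem paths_diverge : ∀ {S π₁}, Paths S π₁ → ∀ {π₂}, Paths S π₂ →
    π₁ = π₂ ∨ ∃ (α : List Letter) (p : Pn) (xs : List Var) (Z : Bool) (σ₁ σ₂ : List Letter),
      π₁ = α ++ Letter.pred p xs Z :: σ₁ ∧ π₂ = α ++ Letter.pred p xs (!Z) :: σ₂ := by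
  intro S π₁ h₁
  induction h₁ with
  | skip => intro π₂ h₂; cases h₂; left; rfl
  | label l => intro π₂ h₂; cases h₂; left; rfl
  | assign y f xs => intro π₂ h₂; cases h₂; left; rfl
  | @seq S₁ S₂ w₁ w₂ hw₁ hw₂ ih₁ ih₂ =>
      intro π₂ h₂
      cases h₂ with
      | @seq _ _ w₁' w₂' hw₁' hw₂' =>
        rcases ih₁ hw₁' with rfl | ⟨α, p, xs, Z, σ₁, σ₂, rfl, h⟩
        · rcases ih₂ hw₂' with rfl | ⟨α, p, xs, Z, σ₁, σ₂, rfl, h⟩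
          · left; rfl
          · right
            exact ⟨w₁ ++ α, p, xs, Z, σ₁, σ₂, by simp, by simp [h]⟩
        · right
          exact ⟨α, p, xs, Z, σ₁ ++ w₂, σ₂ ++ w₂', by simp, by simp [h]⟩
  | @iteTrue p xs S₁ S₂ w hw ih =>
      intro π₂ h₂
      cases h₂ with
      | iteTrue hw' =>
        rcases ih hw' with rfl | ⟨α, q, ys, Z, σ₁, σ₂, rfl, h⟩
        · left; rfl
        · right; exact ⟨Letter.pred p xs true :: α, q, ys, Z, σ₁, σ₂, rfl, by simp [h]⟩
      | @iteFalse _ _ _ _ w' hw' =>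
        right; exact ⟨[], p, xs, true, w, w', rfl, by simp⟩
  | @iteFalse p xs S₁ S₂ w hw ih =>
      intro π₂ h₂
      cases h₂ with
      | iteFalse hw' =>
        rcases ih hw' with rfl | ⟨α, q, ys, Z, σ₁, σ₂, rfl, h⟩
        · left; rfl
        · right; exact ⟨Letter.pred p xs false :: α, q, ys, Z, σ₁, σ₂, rfl, by simp [h]⟩
      | @iteTrue _ _ _ _ w' hw' =>
        right; exact ⟨[], p, xs, false, w, w', rfl, by simp⟩
  | loopFalse q xs T =>
      intro π₂ h₂
      cases h₂ with
      | loopFalse => left; rfl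
      | @loopTrue _ _ _ w' ws' hw' hws' =>
        right; exact ⟨[], q, xs, false, [], w' ++ ws', rfl, by simp⟩
  | @loopTrue q xs T w ws hw hws ih₁ ih₂ =>
      intro π₂ h₂
      cases h₂ with
      | loopFalse =>
        right; exact ⟨[], q, xs, true, w ++ ws, [], rfl, by simp⟩
      | @loopTrue _ _ _ w' ws' hw' hws' =>
        rcases ih₁ hw' with rfl | ⟨α, p, ys, Z, σ₁, σ₂, rfl, h⟩
        · rcases ih₂ hws' with rfl | ⟨α, p, ys, Z, σ₁, σ₂, rfl, h⟩
          · left; rfl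
          · right
            exact ⟨Letter.pred q xs true :: (w ++ α), p, ys, Z, σ₁, σ₂, by simp, by simp [h]⟩
        · right
          exact ⟨Letter.pred q xs true :: α, p, ys, Z, σ₁ ++ ws, σ₂ ++ ws', by simp, by simp [h]⟩

theorem paths_prefix_free {S : Schema} {π₁ π₂ : List Letter}
    (h₁ : Paths S π₁) (h₂ : Paths S π₂) (hp : π₁ <+: π₂) : π₁ = π₂ := by
  rcases paths_diverge h₁ h₂ with rfl | ⟨α, p, xs, Z, σ₁, σ₂, rfl, rfl⟩
  · rfl
  · exfalso
    obtain ⟨t, ht⟩ := hp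
    rw [List.append_assoc] at ht
    have := List.append_cancel_left ht
    rw [List.cons_append] at this
    injection this with h₁ h₂
    injection h₁ with _ _ hZ
    cases Z <;> simp at hZ

/-- Two terminating paths through the same schema that are prefixes of a common word
    are equal. -/
theorem paths_common_prefix {S : Schema} {π₁ π₂ μ : List Letter}
    (h₁ : Paths S π₁) (h₂ : Paths S π₂) (hp₁ : π₁ <+: μ) (hp₂ : π₂ <+: μ) : π₁ = π₂ := by
  rcases List.prefix_or_prefix_of_prefix hp₁ hp₂ with h | h
  · exact paths_prefix_free h₁ h₂ h
  · exact (paths_prefix_free h₂ h₁ h).symm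

end Aux2
section Consist

variable {D : Type} {i : Interp D}

lemma execWord_append (d : Var → D) (a b : List Letter) :
    execWord i d (a ++ b) = execWord i (execWord i d a) b :=
  List.foldl_append ..

lemma consistent_nil (d : Var → D) : Consistent i d [] := by
  intro σ p xs Z h
  have := h.length_le
  simp at this

lemma consistent_prefix {d : Var → D} {τ₁ τ₂ : List Letter} (hp : τ₁ <+: τ₂)
    (h : Consistent i d τ₂) : Consistent i d τ₁ :=
  fun σ p xs Z hσ => h σ p xs Z (hσ.trans hp)

lemma consistent_append_right {d : Var → D} {a b : List Letter}
    (h : Consistent i d (a ++ b)) : Consistent i (execWord i d a) b := by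
  intro σ p xs Z hσ
  have : (a ++ σ) ++ [Letter.pred p xs Z] <+: a ++ b := by
    rw [List.append_assoc]
    exact (List.prefix_append_right_inj a).2 hσ
  have := h (a ++ σ) p xs Z this
  rwa [execWord_append] at this

lemma consistent_append {d : Var → D} {a b : List Letter}
    (ha : Consistent i d a) (hb : Consistent i (execWord i d a) b) :
    Consistent i d (a ++ b) := by
  intro σ p xs Z hσ
  rcases prefix_append_cases hσ with h | ⟨t, ht, htb⟩
  · exact ha σ p xs Z h
  · rcases t with _ | ⟨x, t'⟩
    · simp at ht
      exact ha σ p xs Z (ht ▸ List.prefix_refl _)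
    · -- σ ++ [pred] = a ++ x :: t' ; so a <+: σ
      have hlen : a.length ≤ σ.length := by
        have := congrArg List.length ht; simp at this; omega
      have h1 : a <+: σ ++ [Letter.pred p xs Z] := ht ▸ a.prefix_append _
      have haσ : a <+: σ :=
        List.prefix_of_prefix_length_le h1 (σ.prefix_append [Letter.pred p xs Z]) hlen
      obtain ⟨σ', rfl⟩ := haσ
      rw [List.append_assoc] at ht
      have ht' := List.append_cancel_left ht
      have hpre : σ' ++ [Letter.pred p xs Z] <+: b := ht' ▸ htb
      have := hb σ' p xs Z hpre
      rwa [execWord_append]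

lemma exec_nonasgn (d : Var → D) {m : Letter} (h : ∀ y f xs, m ≠ Letter.asgn y f xs) :
    execLetter i d m = d := by
  cases m with
  | lab l => rfl
  | asgn y f xs => exact absurd rfl (h y f xs)
  | pred p xs Z => rfl

lemma consistent_singleton_nonasgn (d : Var → D) {m : Letter}
    (h : ∀ p xs Z, m ≠ Letter.pred p xs Z) : Consistent i d [m] := by
  intro σ p xs Z hσ
  exfalso
  have hm : Letter.pred p xs Z ∈ [m] :=
    hσ.subset (by simp : Letter.pred p xs Z ∈ σ ++ [Letter.pred p xs Z])
  simp at hm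
  exact h p xs Z hm.symm

lemma consistent_cons_pred {d : Var → D} {p xs Z} {τ : List Letter}
    (hZ : i.pn p (xs.map d) = Z) (h : Consistent i d τ) :
    Consistent i d (Letter.pred p xs Z :: τ) := by
  intro σ q ys Y hσ
  rcases σ with _ | ⟨x, σ'⟩
  · obtain ⟨t, ht⟩ := hσ
    simp only [List.nil_append, List.cons_append] at ht
    injection ht with e1 e2
    injection e1 with f1 f2 f3
    subst f1; subst f2; subst f3
    exact hZ
  · obtain ⟨t, ht⟩ := hσ
    rw [List.cons_append] at ht
    injection ht with e1 e2
    subst e1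
    have : σ' ++ [Letter.pred q ys Y] <+: τ := ⟨t, e2⟩
    have := h σ' q ys Y this
    simpa [execWord, execLetter] using this

lemma consistent_cons_pred_head {d : Var → D} {p xs Z} {τ : List Letter}
    (h : Consistent i d (Letter.pred p xs Z :: τ)) : i.pn p (xs.map d) = Z := by
  have := h [] p xs Z ⟨τ, rfl⟩
  simpa [execWord] using this

lemma consistent_cons_pred_tail {d : Var → D} {p xs Z} {τ : List Letter}
    (h : Consistent i d (Letter.pred p xs Z :: τ)) : Consistent i d τ := by
  have := consistent_append_right (a := [Letter.pred p xs Z]) (b := τ) (by simpa using h)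
  simpa [execWord, execLetter] using this

lemma consistent_snoc_label {d : Var → D} {μ : List Letter} {l : Label}
    (h : Consistent i d μ) : Consistent i d (μ ++ [Letter.lab l]) :=
  consistent_append h (consistent_singleton_nonasgn _ (by intro p xs Z h; cases h))

/-- Comparability: two consistent path prefixes (same interpretation & state) are
    prefix-comparable. -/
theorem consistent_comparable {S : Schema} {τ₁ τ₂ : List Letter} {d : Var → D}
    (h₁ : PathPrefix S τ₁) (hc₁ : Consistent i d τ₁)
    (h₂ : PathPrefix S τ₂) (hc₂ : Consistent i d τ₂) :
    τ₁ <+: τ₂ ∨ τ₂ <+: τ₁ := by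
  obtain ⟨π₁, hπ₁, hp₁⟩ := h₁
  obtain ⟨π₂, hπ₂, hp₂⟩ := h₂
  rcases paths_diverge hπ₁ hπ₂ with rfl | ⟨α, p, xs, Z, σ₁, σ₂, rfl, rfl⟩
  · exact List.prefix_or_prefix_of_prefix hp₁ hp₂
  · rcases le_or_gt τ₁.length α.length with hle₁ | hgt₁
    · exact List.prefix_or_prefix_of_prefix
        ((List.prefix_of_prefix_length_le hp₁ (α.prefix_append _) hle₁).trans
          (α.prefix_append _)) hp₂
    · rcases le_or_gt τ₂.length α.length with hle₂ | hgt₂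
      · exact List.prefix_or_prefix_of_prefix hp₁
          ((List.prefix_of_prefix_length_le hp₂ (α.prefix_append _) hle₂).trans
            (α.prefix_append _))
      · exfalso
        have e₁ : α ++ [Letter.pred p xs Z] <+: τ₁ :=
          List.prefix_of_prefix_length_le ⟨σ₁, by simp⟩ hp₁ (by simp; omega)
        have e₂ : α ++ [Letter.pred p xs (!Z)] <+: τ₂ :=
          List.prefix_of_prefix_length_le ⟨σ₂, by simp⟩ hp₂ (by simp; omega)
        have c₁ := hc₁ α p xs Z e₁
        have c₂ := hc₂ α p xs (!Z) e₂
        rw [c₁] at c₂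
        cases Z <;> simp at c₂

end Consist
section Progress

variable {D : Type} {i : Interp D}

lemma pathPrefix_nil (S : Schema) : PathPrefix S [] := by
  obtain ⟨τ, h⟩ := paths_nonempty S
  exact ⟨τ, h, by simp⟩

lemma pathPrefix_of_prefix {S : Schema} {τ₁ τ₂ : List Letter} (h : PathPrefix S τ₂)
    (hp : τ₁ <+: τ₂) : PathPrefix S τ₁ := by
  obtain ⟨π, hπ, hpre⟩ := h
  exact ⟨π, hπ, hp.trans hpre⟩

/-- Progress: for every fuel n there is a consistent path prefix that either terminates
    within n steps or has length exactly n. -/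
theorem progress (i : Interp D) : ∀ (S : Schema) (n : ℕ) (d : Var → D),
    ∃ τ, Consistent i d τ ∧
      ((Paths S τ ∧ τ.length ≤ n) ∨ (PathPrefix S τ ∧ τ.length = n)) := by
  have zero : ∀ (S : Schema) (d : Var → D), ∃ τ, Consistent i d τ ∧
      ((Paths S τ ∧ τ.length ≤ 0) ∨ (PathPrefix S τ ∧ τ.length = 0)) :=
    fun S d => ⟨[], consistent_nil d, Or.inr ⟨pathPrefix_nil S, rfl⟩⟩
  intro S
  induction S with
  | skip => exact fun n d => ⟨[], consistent_nil d, Or.inl ⟨Paths.skip, by simp⟩⟩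
  | label l =>
      intro n d
      rcases n with _ | m
      · exact zero _ d
      · exact ⟨[Letter.lab l], consistent_singleton_nonasgn d (by intro p xs Z h; cases h),
          Or.inl ⟨Paths.label l, by simp⟩⟩
  | assign y f xs =>
      intro n d
      rcases n with _ | m
      · exact zero _ d
      · exact ⟨[Letter.asgn y f xs], consistent_singleton_nonasgn d (by intro p xs Z h; cases h),
          Or.inl ⟨Paths.assign y f xs, by simp⟩⟩
  | seq S₁ S₂ ih₁ ih₂ =>
      intro n d
      obtain ⟨τ₁, hc₁, h₁⟩ := ih₁ n d
      rcases h₁ with ⟨hP₁, hlen₁⟩ | ⟨⟨π₁, hπ₁, hpre₁⟩, hlen₁⟩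
      · obtain ⟨τ₂, hc₂, h₂⟩ := ih₂ (n - τ₁.length) (execWord i d τ₁)
        refine ⟨τ₁ ++ τ₂, consistent_append hc₁ hc₂, ?_⟩
        rcases h₂ with ⟨hP₂, hlen₂⟩ | ⟨⟨π₂, hπ₂, hpre₂⟩, hlen₂⟩
        · exact Or.inl ⟨Paths.seq hP₁ hP₂, by simp; omega⟩
        · exact Or.inr ⟨⟨τ₁ ++ π₂, Paths.seq hP₁ hπ₂,
            (List.prefix_append_right_inj τ₁).2 hpre₂⟩, by simp; omega⟩
      · obtain ⟨π₂, hπ₂⟩ := paths_nonempty S₂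
        exact ⟨τ₁, hc₁, Or.inr ⟨⟨π₁ ++ π₂, Paths.seq hπ₁ hπ₂,
          hpre₁.trans (π₁.prefix_append π₂)⟩, hlen₁⟩⟩
  | ite p xs S₁ S₂ ih₁ ih₂ =>
      intro n d
      rcases n with _ | m
      · exact zero _ d
      · cases hZ : i.pn p (xs.map d) with
        | true =>
          obtain ⟨τ, hc, h⟩ := ih₁ m d
          refine ⟨Letter.pred p xs true :: τ, consistent_cons_pred hZ hc, ?_⟩
          rcases h with ⟨hP, hlen⟩ | ⟨⟨π, hπ, hpre⟩, hlen⟩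
          · exact Or.inl ⟨Paths.iteTrue hP, by simp; omega⟩
          · exact Or.inr ⟨⟨Letter.pred p xs true :: π, Paths.iteTrue hπ,
              List.cons_prefix_cons.2 ⟨rfl, hpre⟩⟩, by simp [hlen]⟩
        | false =>
          obtain ⟨τ, hc, h⟩ := ih₂ m d
          refine ⟨Letter.pred p xs false :: τ, consistent_cons_pred hZ hc, ?_⟩
          rcases h with ⟨hP, hlen⟩ | ⟨⟨π, hπ, hpre⟩, hlen⟩
          · exact Or.inl ⟨Paths.iteFalse hP, by simp; omega⟩
          · exact Or.inr ⟨⟨Letter.pred p xs false :: π, Paths.iteFalse hπ,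
              List.cons_prefix_cons.2 ⟨rfl, hpre⟩⟩, by simp [hlen]⟩
  | loop q xs T ih =>
      intro n
      induction n using Nat.strong_induction_on with
      | _ n IH =>
        intro d
        rcases n with _ | m
        · exact zero _ d
        · cases hZ : i.pn q (xs.map d) with
          | false =>
            exact ⟨[Letter.pred q xs false], consistent_cons_pred hZ (consistent_nil d),
              Or.inl ⟨Paths.loopFalse q xs T, by simp⟩⟩
          | true =>
            obtain ⟨τT, hcT, hT⟩ := ih m d
            rcases hT with ⟨hPT, hlenT⟩ | ⟨⟨πT, hπT, hpreT⟩, hlenT⟩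
            · obtain ⟨τR, hcR, hR⟩ := IH (m - τT.length) (by omega) (execWord i d τT)
              refine ⟨Letter.pred q xs true :: (τT ++ τR),
                consistent_cons_pred hZ (consistent_append hcT hcR), ?_⟩
              rcases hR with ⟨hPR, hlenR⟩ | ⟨⟨πR, hπR, hpreR⟩, hlenR⟩
              · exact Or.inl ⟨Paths.loopTrue hPT hPR, by simp; omega⟩
              · exact Or.inr ⟨⟨Letter.pred q xs true :: (τT ++ πR), Paths.loopTrue hPT hπR,
                  List.cons_prefix_cons.2 ⟨rfl, (List.prefix_append_right_inj τT).2 hpreR⟩⟩,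
                  by simp; omega⟩
            · obtain ⟨πR, hπR⟩ := paths_nonempty (Schema.loop q xs T)
              exact ⟨Letter.pred q xs true :: τT, consistent_cons_pred hZ hcT,
                Or.inr ⟨⟨Letter.pred q xs true :: (πT ++ πR), Paths.loopTrue hπT hπR,
                  List.cons_prefix_cons.2 ⟨rfl, hpreT.trans (πT.prefix_append πR)⟩⟩,
                  by simp [hlenT]⟩⟩

end Progress
section Projection

lemma filter_paths_loop {Xl : List Sym} {q : Pn} {xs : List Var} {T T' : Schema}
    (hq : Sym.pn q ∈ Xl)
    (hT : ∀ {σ}, Paths T σ → Paths T' (σ.filter (fun m => decide (m.sym ∈ Xl)))) :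
    ∀ {τ}, Paths (Schema.loop q xs T) τ →
      Paths (Schema.loop q xs T') (τ.filter (fun m => decide (m.sym ∈ Xl))) := by
  suffices h : ∀ S₀ τ, Paths S₀ τ → S₀ = Schema.loop q xs T →
      Paths (Schema.loop q xs T') (τ.filter (fun m => decide (m.sym ∈ Xl))) by
    exact fun {τ} hτ => h _ _ hτ rfl
  intro S₀ τ h
  induction h with
  | skip => exact fun e => Schema.noConfusion e
  | label l => exact fun e => Schema.noConfusion e
  | assign y f xs => exact fun e => Schema.noConfusion e
  | seq h₁ h₂ ih₁ ih₂ => exact fun e => Schema.noConfusion e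
  | iteTrue h ih => exact fun e => Schema.noConfusion e
  | iteFalse h ih => exact fun e => Schema.noConfusion e
  | loopFalse q' xs' T'' =>
      intro e
      injection e with e1 e2 e3
      subst e1; subst e2; subst e3
      simpa [Letter.sym, hq] using Paths.loopFalse _ _ T'
  | @loopTrue q' xs' T'' w ws hw hws ihw ihws =>
      intro e
      injection e with e1 e2 e3
      subst e1; subst e2; subst e3
      have := Paths.loopTrue (hT hw) (ihws rfl)
      simpa [Letter.sym, hq, List.filter_append] using this

lemma quotient_filter_paths {Xl : List Sym} : ∀ {S' S}, IsQuotient S' S → S.syms.Nodup →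
    (∀ s ∈ S.syms, (s ∈ Xl ↔ s ∈ S'.syms)) →
    ∀ {τ}, Paths S τ → Paths S' (τ.filter (fun m => decide (m.sym ∈ Xl))) := by
  intro S' S hq
  induction hq with
  | skip S =>
      intro hnd hX τ hτ
      have : τ.filter (fun m => decide (m.sym ∈ Xl)) = [] := by
        refine List.filter_eq_nil_iff.2 (fun m hm => ?_)
        simp only [decide_eq_true_eq]
        intro hmem
        have := (hX _ (paths_mem_syms hτ hm)).1 hmem
        simp [Schema.syms] at this
      rw [this]; exact Paths.skip
  | refl S =>
      intro hnd hX τ hτ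
      have : τ.filter (fun m => decide (m.sym ∈ Xl)) = τ := by
        refine List.filter_eq_self.2 (fun m hm => ?_)
        simp only [decide_eq_true_eq]
        exact (hX _ (paths_mem_syms hτ hm)).2 (paths_mem_syms hτ hm)
      rw [this]; exact hτ
  | @seq S₁' S₁ S₂' S₂ hq₁ hq₂ ih₁ ih₂ =>
      intro hnd hX τ hτ
      have hnd₁ : S₁.syms.Nodup := hnd.of_append_left
      have hnd₂ : S₂.syms.Nodup := hnd.of_append_right
      have hdisj : S₁.syms.Disjoint S₂.syms := List.disjoint_of_nodup_append hnd
      have hX₁ : ∀ s ∈ S₁.syms, s ∈ Xl ↔ s ∈ S₁'.syms := by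
        intro s hs
        constructor
        · intro hsX
          have h' := (hX s (List.mem_append_left _ hs)).1 hsX
          rcases List.mem_append.1 h' with h' | h'
          · exact h'
          · exact absurd ((quot_syms hq₂).subset h') (fun hc => hdisj hs hc)
        · intro hs'
          exact (hX s (List.mem_append_left _ hs)).2 (List.mem_append_left _ hs')
      have hX₂ : ∀ s ∈ S₂.syms, s ∈ Xl ↔ s ∈ S₂'.syms := by
        intro s hs
        constructor
        · intro hsX
          have h' := (hX s (List.mem_append_right _ hs)).1 hsX
          rcases List.mem_append.1 h' with h' | h'
          · exact absurd ((quot_syms hq₁).subset h') (fun hc => hdisj hc hs)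
          · exact h'
        · intro hs'
          exact (hX s (List.mem_append_right _ hs)).2 (List.mem_append_right _ hs')
      cases hτ with
      | seq h₁ h₂ =>
        rw [List.filter_append]
        exact Paths.seq (ih₁ hnd₁ hX₁ h₁) (ih₂ hnd₂ hX₂ h₂)
  | @loop q xs T' T hqT ih =>
      intro hnd hX τ hτ
      have hndT : T.syms.Nodup := (List.nodup_cons.1 hnd).2
      have hqmem : Sym.pn q ∉ T.syms := (List.nodup_cons.1 hnd).1
      have hqX : Sym.pn q ∈ Xl :=
        (hX _ (by simp [Schema.syms])).2 (by simp [Schema.syms])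
      have hXT : ∀ s ∈ T.syms, s ∈ Xl ↔ s ∈ T'.syms := by
        intro s hs
        constructor
        · intro hsX
          have := (hX s (List.mem_cons_of_mem _ hs)).1 hsX
          rcases List.mem_cons.1 this with rfl | h
          · exact absurd hs hqmem
          · exact h
        · intro hs'
          exact (hX s (List.mem_cons_of_mem _ hs)).2 (List.mem_cons_of_mem _ hs')
      exact filter_paths_loop hqX (fun {σ} hσ => ih hndT hXT hσ) hτ
  | @ite p xs T₁ S₁ T₂ S₂ hq₁ hq₂ ih₁ ih₂ =>
      intro hnd hX τ hτ
      have hnd' : (S₁.syms ++ S₂.syms).Nodup := (List.nodup_cons.1 hnd).2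
      have hpmem : Sym.pn p ∉ S₁.syms ++ S₂.syms := (List.nodup_cons.1 hnd).1
      have hnd₁ : S₁.syms.Nodup := hnd'.of_append_left
      have hnd₂ : S₂.syms.Nodup := hnd'.of_append_right
      have hdisj : S₁.syms.Disjoint S₂.syms := List.disjoint_of_nodup_append hnd'
      have hpX : Sym.pn p ∈ Xl :=
        (hX _ (by simp [Schema.syms])).2 (by simp [Schema.syms])
      have hX₁ : ∀ s ∈ S₁.syms, s ∈ Xl ↔ s ∈ T₁.syms := by
        intro s hs
        constructor
        · intro hsX
          have h' := (hX s (List.mem_cons_of_mem _ (List.mem_append_left _ hs))).1 hsX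
          rcases List.mem_cons.1 h' with rfl | h'
          · exact absurd (List.mem_append_left _ hs) hpmem
          · rcases List.mem_append.1 h' with h' | h'
            · exact h'
            · exact absurd ((quot_syms hq₂).subset h') (fun hc => hdisj hs hc)
        · intro hs'
          exact (hX s (List.mem_cons_of_mem _ (List.mem_append_left _ hs))).2
            (List.mem_cons_of_mem _ (List.mem_append_left _ hs'))
      have hX₂ : ∀ s ∈ S₂.syms, s ∈ Xl ↔ s ∈ T₂.syms := by
        intro s hs
        constructor
        · intro hsX
          have h' := (hX s (List.mem_cons_of_mem _ (List.mem_append_right _ hs))).1 hsX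
          rcases List.mem_cons.1 h' with rfl | h'
          · exact absurd (List.mem_append_right _ hs) hpmem
          · rcases List.mem_append.1 h' with h' | h'
            · exact absurd ((quot_syms hq₁).subset h') (fun hc => hdisj hc hs)
            · exact h'
        · intro hs'
          exact (hX s (List.mem_cons_of_mem _ (List.mem_append_right _ hs))).2
            (List.mem_cons_of_mem _ (List.mem_append_right _ hs'))
      cases hτ with
      | iteTrue h => simpa [Letter.sym, hpX] using Paths.iteTrue (ih₁ hnd₁ hX₁ h)
      | iteFalse h => simpa [Letter.sym, hpX] using Paths.iteFalse (ih₂ hnd₂ hX₂ h)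

lemma proj_pathPrefix {S' S : Schema} (hq : IsQuotient S' S) (hnd : S.syms.Nodup)
    {ρ : List Letter} (h : PathPrefix S ρ) : PathPrefix S' (proj S' ρ) := by
  obtain ⟨π, hπ, hpre⟩ := h
  exact ⟨proj S' π, quotient_filter_paths hq hnd (fun s _ => Iff.rfl) hπ, hpre.filter _⟩

lemma proj_append_label {S' : Schema} {ρ : List Letter} {l : Label}
    (hl : Sym.lab l ∈ S'.syms) :
    proj S' (ρ ++ [Letter.lab l]) = proj S' ρ ++ [Letter.lab l] := by
  simp [proj, List.filter_append, Letter.sym, hl]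

end Projection
section Surgery

lemma loop_head {q : Pn} {xs : List Var} {T : Schema} {ws : List Letter}
    (h : Paths (Schema.loop q xs T) ws) :
    ∃ Z rest, ws = Letter.pred q xs Z :: rest := by
  cases h with
  | loopFalse => exact ⟨false, [], rfl⟩
  | loopTrue hw hws => exact ⟨true, _, rfl⟩

/-- Deleting one iteration of a while loop from a terminating path through a linear
    schema yields a terminating path. -/
theorem loop_del : ∀ {S τ}, Paths S τ → ∀ {p : Pn} {xs : List Var} {B α σ δ},
    S.syms.Nodup → Sub (Schema.loop p xs B) S → Paths B σ →
    τ = α ++ Letter.pred p xs true :: (σ ++ δ) → Paths S (α ++ δ) := by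
  intro S τ h
  induction h with
  | skip =>
      intro p xs B α σ δ hnd hsub hσ heq
      exfalso
      have h' := congrArg List.length heq
      simp at h'
  | label l =>
      intro p xs B α σ δ hnd hsub hσ heq
      have hmem : Letter.pred p xs true ∈ [Letter.lab l] := by rw [heq]; simp
      simp at hmem
  | assign y f zs =>
      intro p xs B α σ δ hnd hsub hσ heq
      have hmem : Letter.pred p xs true ∈ [Letter.asgn y f zs] := by rw [heq]; simp
      simp at hmem
  | @seq S₁ S₂ w₁ w₂ h₁ h₂ ih₁ ih₂ =>
      intro p xs B α σ δ hnd hsub hσ heq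
      have hnd₁ : S₁.syms.Nodup := hnd.of_append_left
      have hnd₂ : S₂.syms.Nodup := hnd.of_append_right
      have hdisj : S₁.syms.Disjoint S₂.syms := List.disjoint_of_nodup_append hnd
      have hBloop : ∀ {s : Sym}, s ∈ B.syms → s ∈ (Schema.loop p xs B).syms := by
        intro s hs; simp [Schema.syms]; right; exact hs
      cases hsub with
      | seqL hs =>
        have hp₁ : Sym.pn p ∈ S₁.syms := sub_syms hs (by simp [Schema.syms])
        rcases lt_or_ge α.length w₁.length with hlt | hge
        · obtain ⟨rest₁, hw₁, hrest⟩ := split_left heq hlt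
          rcases le_or_gt σ.length rest₁.length with hsl | hsl
          · have hσr : σ <+: rest₁ := by
              refine List.prefix_of_prefix_length_le (σ.prefix_append δ) ?_ hsl
              rw [hrest]; exact rest₁.prefix_append w₂
            obtain ⟨δ₁, rfl⟩ := hσr
            have hδ : δ = δ₁ ++ w₂ := by
              rw [List.append_assoc] at hrest
              exact List.append_cancel_left hrest
            have := ih₁ hnd₁ hs hσ hw₁
            rw [hδ, ← List.append_assoc]
            exact Paths.seq this h₂
          · have hrσ : rest₁ <+: σ := by
              refine List.prefix_of_prefix_length_le ?_ (σ.prefix_append δ) (Nat.le_of_lt hsl)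
              rw [hrest]; exact rest₁.prefix_append w₂
            obtain ⟨t, rfl⟩ := hrσ
            match t, hsl with
            | m :: t', _ =>
              exfalso
              have hw₂' : w₂ = m :: (t' ++ δ) := by
                rw [List.append_assoc, List.cons_append] at hrest
                have := List.append_cancel_left hrest
                exact this.symm
              have hm₂ : m.sym ∈ S₂.syms :=
                paths_mem_syms h₂ (by rw [hw₂']; simp)
              have hm₁ : m.sym ∈ S₁.syms :=
                sub_syms hs (hBloop (paths_mem_syms hσ (by simp)))
              exact hdisj hm₁ hm₂ 
            | [], hsl => exact absurd hsl (by simp)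
        · obtain ⟨α₂, hα, hw₂⟩ := split_right heq hge
          exfalso
          have hm₂ : Sym.pn p ∈ S₂.syms := by
            have : Letter.pred p xs true ∈ w₂ := by rw [hw₂]; simp
            simpa [Letter.sym] using paths_mem_syms h₂ this
          exact hdisj hp₁ hm₂
      | seqR hs =>
        have hp₂ : Sym.pn p ∈ S₂.syms := sub_syms hs (by simp [Schema.syms])
        rcases lt_or_ge α.length w₁.length with hlt | hge
        · obtain ⟨rest₁, hw₁, hrest⟩ := split_left heq hlt
          exfalso
          have hm₁ : Sym.pn p ∈ S₁.syms := by
            have : Letter.pred p xs true ∈ w₁ := by rw [hw₁]; simp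
            simpa [Letter.sym] using paths_mem_syms h₁ this
          exact hdisj hm₁ hp₂
        · obtain ⟨α₂, hα, hw₂⟩ := split_right heq hge
          have := ih₂ hnd₂ hs hσ hw₂
          rw [hα, List.append_assoc]
          exact Paths.seq h₁ this
  | @iteTrue p' xs' S₁ S₂ w h ih =>
      intro p xs B α σ δ hnd hsub hσ heq
      have hnd' : (S₁.syms ++ S₂.syms).Nodup := (List.nodup_cons.1 hnd).2
      have hpmem : Sym.pn p' ∉ S₁.syms ++ S₂.syms := (List.nodup_cons.1 hnd).1
      have hdisj : S₁.syms.Disjoint S₂.syms := List.disjoint_of_nodup_append hnd'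
      have hBloop : ∀ {s : Sym}, s ∈ B.syms → s ∈ (Schema.loop p xs B).syms := by
        intro s hs; simp [Schema.syms]; right; exact hs
      cases hsub with
      | iteT hs =>
        have hp₁ : Sym.pn p ∈ S₁.syms := sub_syms hs (by simp [Schema.syms])
        rcases α with _ | ⟨a, α'⟩
        · exfalso
          rw [List.nil_append] at heq
          injection heq with e1 e2
          injection e1 with f1 f2 f3
          subst f1
          exact hpmem (List.mem_append_left _ hp₁)
        · rw [List.cons_append] at heq
          injection heq with e1 e2
          subst e1
          exact Paths.iteTrue (ih hnd'.of_append_left hs hσ e2)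
      | iteF hs =>
        exfalso
        have hp₂ : Sym.pn p ∈ S₂.syms := sub_syms hs (by simp [Schema.syms])
        rcases α with _ | ⟨a, α'⟩
        · rw [List.nil_append] at heq
          injection heq with e1 e2
          injection e1 with f1 f2 f3
          subst f1
          exact hpmem (List.mem_append_right _ hp₂)
        · rw [List.cons_append] at heq
          injection heq with e1 e2
          have hp₁ : Sym.pn p ∈ S₁.syms := by
            have : Letter.pred p xs true ∈ w := by rw [e2]; simp
            simpa [Letter.sym] using paths_mem_syms h this
          exact hdisj hp₁ hp₂
  | @iteFalse p' xs' S₁ S₂ w h ih =>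
      intro p xs B α σ δ hnd hsub hσ heq
      have hnd' : (S₁.syms ++ S₂.syms).Nodup := (List.nodup_cons.1 hnd).2
      have hpmem : Sym.pn p' ∉ S₁.syms ++ S₂.syms := (List.nodup_cons.1 hnd).1
      have hdisj : S₁.syms.Disjoint S₂.syms := List.disjoint_of_nodup_append hnd'
      cases hsub with
      | iteF hs =>
        have hp₂ : Sym.pn p ∈ S₂.syms := sub_syms hs (by simp [Schema.syms])
        rcases α with _ | ⟨a, α'⟩
        · exfalso
          rw [List.nil_append] at heq
          injection heq with e1 e2
          injection e1 with f1 f2 f3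
          subst f1
          exact hpmem (List.mem_append_right _ hp₂)
        · rw [List.cons_append] at heq
          injection heq with e1 e2
          subst e1
          exact Paths.iteFalse (ih hnd'.of_append_right hs hσ e2)
      | iteT hs =>
        exfalso
        have hp₁ : Sym.pn p ∈ S₁.syms := sub_syms hs (by simp [Schema.syms])
        rcases α with _ | ⟨a, α'⟩
        · rw [List.nil_append] at heq
          injection heq with e1 e2
          injection e1 with f1 f2 f3
          subst f1
          exact hpmem (List.mem_append_left _ hp₁)
        · rw [List.cons_append] at heq
          injection heq with e1 e2
          have hp₂ : Sym.pn p ∈ S₂.syms := by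
            have : Letter.pred p xs true ∈ w := by rw [e2]; simp
            simpa [Letter.sym] using paths_mem_syms h this
          exact hdisj hp₁ hp₂
  | loopFalse q' xs' T =>
      intro p xs B α σ δ hnd hsub hσ heq
      have hmem : Letter.pred p xs true ∈ [Letter.pred q' xs' false] := by rw [heq]; simp
      simp at hmem
  | @loopTrue q' xs' T w ws hw hws ihw ihws =>
      intro p xs B α σ δ hnd hsub hσ heq
      have hndT : T.syms.Nodup := (List.nodup_cons.1 hnd).2
      have hqT : Sym.pn q' ∉ T.syms := (List.nodup_cons.1 hnd).1
      cases hsub with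
      | refl =>
        rcases α with _ | ⟨a, α'⟩
        · rw [List.nil_append] at heq
          injection heq with e1 e2
          have hwσ : w = σ :=
            paths_common_prefix hw hσ (w.prefix_append ws) ⟨δ, e2.symm⟩
          subst hwσ
          have : ws = δ := List.append_cancel_left e2
          rw [List.nil_append, ← this]
          exact hws
        · rw [List.cons_append] at heq
          injection heq with e1 e2
          subst e1
          rcases lt_or_ge α'.length w.length with hlt | hge
          · exfalso
            obtain ⟨rest₁, hw', hrest⟩ := split_left e2 hlt
            have : Sym.pn q' ∈ T.syms := by
              have : Letter.pred q' xs' true ∈ w := by rw [hw']; simp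
              simpa [Letter.sym] using paths_mem_syms hw this
            exact hqT this
          · obtain ⟨α₂, hα, hws'⟩ := split_right e2 hge
            have := ihws hnd (Sub.refl _) hσ hws'
            rw [hα, List.cons_append, List.append_assoc]
            exact Paths.loopTrue hw this
      | loop hs =>
        have hpT : Sym.pn p ∈ T.syms := sub_syms hs (by simp [Schema.syms])
        have hBT : ∀ {s : Sym}, s ∈ B.syms → s ∈ T.syms := by
          intro s hsB
          exact sub_syms hs (by simp [Schema.syms]; right; exact hsB)
        rcases α with _ | ⟨a, α'⟩
        · exfalso
          rw [List.nil_append] at heq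
          injection heq with e1 e2
          injection e1 with f1 f2 f3
          subst f1
          exact hqT hpT
        · rw [List.cons_append] at heq
          injection heq with e1 e2
          subst e1
          rcases lt_or_ge α'.length w.length with hlt | hge
          · obtain ⟨rest₁, hw', hrest⟩ := split_left e2 hlt
            rcases le_or_gt σ.length rest₁.length with hsl | hsl
            · have hσr : σ <+: rest₁ := by
                refine List.prefix_of_prefix_length_le (σ.prefix_append δ) ?_ hsl
                rw [hrest]; exact rest₁.prefix_append ws
              obtain ⟨δ₁, rfl⟩ := hσr
              have hδ : δ = δ₁ ++ ws := by
                rw [List.append_assoc] at hrest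
                exact List.append_cancel_left hrest
              have := ihw hndT hs hσ hw'
              rw [hδ, List.cons_append, ← List.append_assoc]
              exact Paths.loopTrue this hws
            · exfalso
              have hrσ : rest₁ <+: σ := by
                refine List.prefix_of_prefix_length_le ?_ (σ.prefix_append δ) (Nat.le_of_lt hsl)
                rw [hrest]; exact rest₁.prefix_append ws
              obtain ⟨t, rfl⟩ := hrσ
              match t, hsl with
              | m :: t', _ =>
                have hws' : ws = m :: (t' ++ δ) := by
                  rw [List.append_assoc, List.cons_append] at hrest
                  exact (List.append_cancel_left hrest).symm
                obtain ⟨Z, rest, hZ⟩ := loop_head hws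
                have hmq : m = Letter.pred q' xs' Z := by
                  have h2 := hws'.symm.trans hZ
                  simp only [List.cons.injEq] at h2
                  exact h2.1
                have : Sym.pn q' ∈ T.syms := by
                  have hmem : m ∈ rest₁ ++ m :: t' := by simp
                  have := hBT (paths_mem_syms hσ hmem)
                  rwa [hmq] at this
                exact hqT this
              | [], hsl => exact absurd hsl (by simp)
          · obtain ⟨α₂, hα, hws'⟩ := split_right e2 hge
            have := ihws hnd (Sub.loop hs) hσ hws'
            rw [hα, List.cons_append, List.append_assoc]
            exact Paths.loopTrue hw this

end Surgery
section Surgery2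

lemma branch_syms {Z : Bool} {S₁ S₂ : Schema} {σ : List Letter}
    (h : Paths (if Z then S₁ else S₂) σ) {m : Letter} (hm : m ∈ σ) :
    m.sym ∈ (Schema.ite p xs S₁ S₂).syms := by
  cases Z with
  | true =>
      have := paths_mem_syms (by simpa using h) hm
      simp [Schema.syms]; right; left; exact this
  | false =>
      have := paths_mem_syms (by simpa using h) hm
      simp [Schema.syms]; right; right; exact this

/-- Swapping the branch taken at a conditional in a terminating path through a linear
    schema, replacing the executed branch path by a path through the other branch. -/
theorem ite_swap : ∀ {S τ}, Paths S τ → ∀ {p : Pn} {xs : List Var} {S₁ S₂ α σ σ' δ} {Z : Bool},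
    S.syms.Nodup → Sub (Schema.ite p xs S₁ S₂) S →
    Paths (if Z then S₁ else S₂) σ → Paths (if Z then S₂ else S₁) σ' →
    τ = α ++ Letter.pred p xs Z :: (σ ++ δ) →
    Paths S (α ++ Letter.pred p xs (!Z) :: (σ' ++ δ)) := by
  intro S τ h
  induction h with
  | skip =>
      intro p xs S₁ S₂ α σ σ' δ Z hnd hsub hσ hσ' heq
      exfalso
      have h' := congrArg List.length heq
      simp at h'
  | label l =>
      intro p xs S₁ S₂ α σ σ' δ Z hnd hsub hσ hσ' heq
      have hmem : Letter.pred p xs Z ∈ [Letter.lab l] := by rw [heq]; simp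
      simp at hmem
  | assign y f zs =>
      intro p xs S₁ S₂ α σ σ' δ Z hnd hsub hσ hσ' heq
      have hmem : Letter.pred p xs Z ∈ [Letter.asgn y f zs] := by rw [heq]; simp
      simp at hmem
  | @seq T₁ T₂ w₁ w₂ h₁ h₂ ih₁ ih₂ =>
      intro p xs S₁ S₂ α σ σ' δ Z hnd hsub hσ hσ' heq
      have hnd₁ : T₁.syms.Nodup := hnd.of_append_left
      have hnd₂ : T₂.syms.Nodup := hnd.of_append_right
      have hdisj : T₁.syms.Disjoint T₂.syms := List.disjoint_of_nodup_append hnd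
      cases hsub with
      | seqL hs =>
        have hp₁ : Sym.pn p ∈ T₁.syms := sub_syms hs (by simp [Schema.syms])
        rcases lt_or_ge α.length w₁.length with hlt | hge
        · obtain ⟨rest₁, hw₁, hrest⟩ := split_left heq hlt
          rcases le_or_gt σ.length rest₁.length with hsl | hsl
          · have hσr : σ <+: rest₁ := by
              refine List.prefix_of_prefix_length_le (σ.prefix_append δ) ?_ hsl
              rw [hrest]; exact rest₁.prefix_append w₂
            obtain ⟨δ₁, rfl⟩ := hσr
            have hδ : δ = δ₁ ++ w₂ := by
              rw [List.append_assoc] at hrest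
              exact List.append_cancel_left hrest
            have := Paths.seq (ih₁ hnd₁ hs hσ hσ' hw₁) h₂
            rw [hδ]
            simpa [List.append_assoc] using this
          · exfalso
            have hrσ : rest₁ <+: σ := by
              refine List.prefix_of_prefix_length_le ?_ (σ.prefix_append δ) (Nat.le_of_lt hsl)
              rw [hrest]; exact rest₁.prefix_append w₂
            obtain ⟨t, rfl⟩ := hrσ
            match t, hsl with
            | m :: t', _ =>
              have hw₂' : w₂ = m :: (t' ++ δ) := by
                rw [List.append_assoc, List.cons_append] at hrest
                exact (List.append_cancel_left hrest).symm
              have hm₂ : m.sym ∈ T₂.syms :=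
                paths_mem_syms h₂ (by rw [hw₂']; simp)
              have hm₁ : m.sym ∈ T₁.syms :=
                sub_syms hs (branch_syms hσ (by simp))
              exact hdisj hm₁ hm₂
            | [], hsl => exact absurd hsl (by simp)
        · obtain ⟨α₂, hα, hw₂⟩ := split_right heq hge
          exfalso
          have hm₂ : Sym.pn p ∈ T₂.syms := by
            have : Letter.pred p xs Z ∈ w₂ := by rw [hw₂]; simp
            simpa [Letter.sym] using paths_mem_syms h₂ this
          exact hdisj hp₁ hm₂
      | seqR hs =>
        have hp₂ : Sym.pn p ∈ T₂.syms := sub_syms hs (by simp [Schema.syms])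
        rcases lt_or_ge α.length w₁.length with hlt | hge
        · obtain ⟨rest₁, hw₁, hrest⟩ := split_left heq hlt
          exfalso
          have hm₁ : Sym.pn p ∈ T₁.syms := by
            have : Letter.pred p xs Z ∈ w₁ := by rw [hw₁]; simp
            simpa [Letter.sym] using paths_mem_syms h₁ this
          exact hdisj hm₁ hp₂
        · obtain ⟨α₂, hα, hw₂⟩ := split_right heq hge
          have := Paths.seq h₁ (ih₂ hnd₂ hs hσ hσ' hw₂)
          rw [hα]
          simpa [List.append_assoc] using this
  | @iteTrue p' xs' T₁ T₂ w h ih =>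
      intro p xs S₁ S₂ α σ σ' δ Z hnd hsub hσ hσ' heq
      have hnd' : (T₁.syms ++ T₂.syms).Nodup := (List.nodup_cons.1 hnd).2
      have hpmem : Sym.pn p' ∉ T₁.syms ++ T₂.syms := (List.nodup_cons.1 hnd).1
      have hdisj : T₁.syms.Disjoint T₂.syms := List.disjoint_of_nodup_append hnd'
      cases hsub with
      | refl =>
        rcases α with _ | ⟨a, α'⟩
        · rw [List.nil_append] at heq
          injection heq with e1 e2
          injection e1 with f1 f2 f3
          subst f3
          simp at hσ hσ'
          have hwσ : σ = w := paths_prefix_free hσ h ⟨δ, e2.symm⟩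
          subst hwσ
          have hδ : δ = [] := by simpa using e2.symm
          subst hδ
          simpa using Paths.iteFalse (S₁ := T₁) hσ'
        · rw [List.cons_append] at heq
          injection heq with e1 e2
          exfalso
          have : Sym.pn p' ∈ T₁.syms := by
            have : Letter.pred p' xs' Z ∈ w := by rw [e2]; simp
            simpa [Letter.sym] using paths_mem_syms h this
          exact hpmem (List.mem_append_left _ this)
      | iteT hs =>
        have hp₁ : Sym.pn p ∈ T₁.syms := sub_syms hs (by simp [Schema.syms])
        rcases α with _ | ⟨a, α'⟩
        · exfalso
          rw [List.nil_append] at heq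
          injection heq with e1 e2
          injection e1 with f1 f2 f3
          subst f1
          exact hpmem (List.mem_append_left _ hp₁)
        · rw [List.cons_append] at heq
          injection heq with e1 e2
          subst e1
          exact Paths.iteTrue (ih hnd'.of_append_left hs hσ hσ' e2)
      | iteF hs =>
        have hp₂ : Sym.pn p ∈ T₂.syms := sub_syms hs (by simp [Schema.syms])
        rcases α with _ | ⟨a, α'⟩
        · exfalso
          rw [List.nil_append] at heq
          injection heq with e1 e2
          injection e1 with f1 f2 f3
          subst f1
          exact hpmem (List.mem_append_right _ hp₂)
        · rw [List.cons_append] at heq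
          injection heq with e1 e2
          exfalso
          have hp₁ : Sym.pn p ∈ T₁.syms := by
            have : Letter.pred p xs Z ∈ w := by rw [e2]; simp
            simpa [Letter.sym] using paths_mem_syms h this
          exact hdisj hp₁ hp₂
  | @iteFalse p' xs' T₁ T₂ w h ih =>
      intro p xs S₁ S₂ α σ σ' δ Z hnd hsub hσ hσ' heq
      have hnd' : (T₁.syms ++ T₂.syms).Nodup := (List.nodup_cons.1 hnd).2
      have hpmem : Sym.pn p' ∉ T₁.syms ++ T₂.syms := (List.nodup_cons.1 hnd).1
      have hdisj : T₁.syms.Disjoint T₂.syms := List.disjoint_of_nodup_append hnd'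
      cases hsub with
      | refl =>
        rcases α with _ | ⟨a, α'⟩
        · rw [List.nil_append] at heq
          injection heq with e1 e2
          injection e1 with f1 f2 f3
          subst f3
          simp at hσ hσ'
          have hwσ : σ = w := paths_prefix_free hσ h ⟨δ, e2.symm⟩
          subst hwσ
          have hδ : δ = [] := by simpa using e2.symm
          subst hδ
          simpa using Paths.iteTrue (S₂ := T₂) hσ'
        · rw [List.cons_append] at heq
          injection heq with e1 e2
          exfalso
          have : Sym.pn p' ∈ T₂.syms := by
            have : Letter.pred p' xs' Z ∈ w := by rw [e2]; simp
            simpa [Letter.sym] using paths_mem_syms h this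
          exact hpmem (List.mem_append_right _ this)
      | iteF hs =>
        have hp₂ : Sym.pn p ∈ T₂.syms := sub_syms hs (by simp [Schema.syms])
        rcases α with _ | ⟨a, α'⟩
        · exfalso
          rw [List.nil_append] at heq
          injection heq with e1 e2
          injection e1 with f1 f2 f3
          subst f1
          exact hpmem (List.mem_append_right _ hp₂)
        · rw [List.cons_append] at heq
          injection heq with e1 e2
          subst e1
          exact Paths.iteFalse (ih hnd'.of_append_right hs hσ hσ' e2)
      | iteT hs =>
        have hp₁ : Sym.pn p ∈ T₁.syms := sub_syms hs (by simp [Schema.syms])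
        rcases α with _ | ⟨a, α'⟩
        · exfalso
          rw [List.nil_append] at heq
          injection heq with e1 e2
          injection e1 with f1 f2 f3
          subst f1
          exact hpmem (List.mem_append_left _ hp₁)
        · rw [List.cons_append] at heq
          injection heq with e1 e2
          exfalso
          have hp₂ : Sym.pn p ∈ T₂.syms := by
            have : Letter.pred p xs Z ∈ w := by rw [e2]; simp
            simpa [Letter.sym] using paths_mem_syms h this
          exact hdisj hp₁ hp₂
  | loopFalse q' xs' T =>
      intro p xs S₁ S₂ α σ σ' δ Z hnd hsub hσ hσ' heq
      exfalso
      have hqT : Sym.pn q' ∉ T.syms := (List.nodup_cons.1 hnd).1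
      cases hsub with
      | loop hs =>
        have hpT : Sym.pn p ∈ T.syms := sub_syms hs (by simp [Schema.syms])
        rcases α with _ | ⟨a, α'⟩
        · rw [List.nil_append] at heq
          injection heq with e1 e2
          injection e1 with f1 f2 f3
          subst f1
          exact hqT hpT
        · rw [List.cons_append] at heq
          injection heq with e1 e2
          exact absurd (congrArg List.length e2) (by simp)
  | @loopTrue q' xs' T w ws hw hws ihw ihws =>
      intro p xs S₁ S₂ α σ σ' δ Z hnd hsub hσ hσ' heq
      have hndT : T.syms.Nodup := (List.nodup_cons.1 hnd).2
      have hqT : Sym.pn q' ∉ T.syms := (List.nodup_cons.1 hnd).1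
      cases hsub with
      | loop hs =>
        have hpT : Sym.pn p ∈ T.syms := sub_syms hs (by simp [Schema.syms])
        have hBT : ∀ {s : Sym}, s ∈ (Schema.ite p xs S₁ S₂).syms → s ∈ T.syms :=
          fun hs' => sub_syms hs hs'
        rcases α with _ | ⟨a, α'⟩
        · exfalso
          rw [List.nil_append] at heq
          injection heq with e1 e2
          injection e1 with f1 f2 f3
          subst f1
          exact hqT hpT
        · rw [List.cons_append] at heq
          injection heq with e1 e2
          subst e1
          rcases lt_or_ge α'.length w.length with hlt | hge
          · obtain ⟨rest₁, hw', hrest⟩ := split_left e2 hlt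
            rcases le_or_gt σ.length rest₁.length with hsl | hsl
            · have hσr : σ <+: rest₁ := by
                refine List.prefix_of_prefix_length_le (σ.prefix_append δ) ?_ hsl
                rw [hrest]; exact rest₁.prefix_append ws
              obtain ⟨δ₁, rfl⟩ := hσr
              have hδ : δ = δ₁ ++ ws := by
                rw [List.append_assoc] at hrest
                exact List.append_cancel_left hrest
              have := Paths.loopTrue (ihw hndT hs hσ hσ' hw') hws
              rw [hδ]
              simpa [List.append_assoc] using this
            · exfalso
              have hrσ : rest₁ <+: σ := by
                refine List.prefix_of_prefix_length_le ?_ (σ.prefix_append δ) (Nat.le_of_lt hsl)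
                rw [hrest]; exact rest₁.prefix_append ws
              obtain ⟨t, rfl⟩ := hrσ
              match t, hsl with
              | m :: t', _ =>
                have hws' : ws = m :: (t' ++ δ) := by
                  rw [List.append_assoc, List.cons_append] at hrest
                  exact (List.append_cancel_left hrest).symm
                obtain ⟨Y, rest, hY⟩ := loop_head hws
                have hmq : m = Letter.pred q' xs' Y := by
                  have h2 := hws'.symm.trans hY
                  simp only [List.cons.injEq] at h2
                  exact h2.1
                have : Sym.pn q' ∈ T.syms := by
                  have hmem : m ∈ rest₁ ++ m :: t' := by simp
                  have := hBT (branch_syms hσ hmem)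
                  rwa [hmq] at this
                exact hqT this
              | [], hsl => exact absurd hsl (by simp)
          · obtain ⟨α₂, hα, hws'⟩ := split_right e2 hge
            have := Paths.loopTrue hw (ihws hnd (Sub.loop hs) hσ hσ' hws')
            rw [hα]
            simpa [List.append_assoc] using this

end Surgery2
section Reduction

lemma simpleRed_length {S : Schema} {l : Label} {a b : List Letter}
    (h : SimpleRed S l a b) : b.length ≤ a.length := by
  cases h with
  | loopRed _ _ _ => simp; omega
  | iteRed _ _ _ _ _ => simp

lemma reducible_length {S : Schema} {l : Label} {a b : List Letter}
    (h : Reducible S l a b) : b.length ≤ a.length := by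
  induction h with
  | refl => exact le_rfl
  | tail _ hbc ih => exact le_trans (simpleRed_length hbc) ih

lemma simpleRed_pathPrefix {S : Schema} {l : Label} {μ μ' : List Letter}
    (hnd : S.syms.Nodup) (hred : SimpleRed S l μ μ') {κ : List Letter}
    (h : PathPrefix S (μ ++ κ)) : PathPrefix S (μ' ++ κ) := by
  obtain ⟨full, hfull, rest, hrest⟩ := h
  cases hred with
  | @loopRed p xs B σ α γ hsub hσ hl =>
      have heq : full = α ++ Letter.pred p xs true ::
          (σ ++ (Letter.pred p xs false :: (γ ++ κ ++ rest))) := by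
        rw [← hrest]; simp [List.append_assoc]
      have := loop_del hfull hnd hsub hσ heq
      exact ⟨_, this, rest, by simp [List.append_assoc]⟩
  | @iteRed p xs S₁ S₂ σ α γ Z hsub hσ hskip hl₁ hl₂ =>
      have heq : full = α ++ Letter.pred p xs Z :: (σ ++ (γ ++ κ ++ rest)) := by
        rw [← hrest]; simp [List.append_assoc]
      have hσ' : Paths (if Z then S₂ else S₁) [] := by rw [hskip]; exact Paths.skip
      have := ite_swap hfull hnd hsub hσ hσ' heq
      exact ⟨_, this, rest, by simp [List.append_assoc]⟩

lemma reducible_pathPrefix {S : Schema} {l : Label} {μ₀ μ : List Letter}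
    (hnd : S.syms.Nodup) (h : Reducible S l μ₀ μ) {κ : List Letter}
    (h0 : PathPrefix S (μ₀ ++ κ)) : PathPrefix S (μ ++ κ) := by
  induction h with
  | refl => exact h0
  | tail _ hbc ih => exact simpleRed_pathPrefix hnd hbc ih

end Reduction
/-- S' is a (ρl,V)-dynamic slice of S iff there is no path τ through S'
    compatible with ρ — with τ either a terminating path through S' of length < |proj_{S'}(ρ)l|
    or a path of length exactly |proj_{S'}(ρ)l| — such that τ has no prefix ρ'l with
    proj_{S'}(ρ) l-reducible to ρ' and M[ρ']_e(v) = M[ρ]_e(v) for all v ∈ V.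
    (Moreover every path ρ'l through S' with proj_{S'}(ρ) l-reducible to ρ' has length at
    most |proj_{S'}(ρ)l|.) -/
theorem statement_14 (S : Schema) (l : Label) (ρ : List Letter) (V : Set Var) (S' : Schema)
    (hlin : S.Linear) (hlS : Sym.lab l ∈ S.syms)
    (hpath : PathPrefix S (ρ ++ [Letter.lab l]))
    (hexec : Executable S (ρ ++ [Letter.lab l]))
    (hquot : IsQuotient S' S) (hlS' : Sym.lab l ∈ S'.syms) :
    (IsDS S ρ l V S' ↔
      ¬ ∃ τ : List Letter, PathPrefix S' τ ∧ Compatible S ρ S' τ ∧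
        ((Paths S' τ ∧ τ.length < (proj S' ρ).length + 1) ∨
          τ.length = (proj S' ρ).length + 1) ∧
        ¬ ∃ ρ' : List Letter, (ρ' ++ [Letter.lab l]) <+: τ ∧
            Reducible S' l (proj S' ρ) ρ' ∧ ∀ v ∈ V, hExec ρ' v = hExec ρ v) ∧
    (∀ ρ' : List Letter, PathPrefix S' (ρ' ++ [Letter.lab l]) →
      Reducible S' l (proj S' ρ) ρ' →
      (ρ' ++ [Letter.lab l]).length ≤ (proj S' ρ).length + 1) := by
  have hndS : S.syms.Nodup := hlin
  have hndS' : S'.syms.Nodup := (quot_syms hquot).nodup hndS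
  constructor
  · constructor
    · -- IsDS → no bad τ
      intro hDS
      rintro ⟨τ, hτpath, ⟨D, i, d, hρ, hτpp, hτc⟩, hlen, hnone⟩
      obtain ⟨ρ₀, hρ₀pi, hρ₀red, hρ₀V⟩ := hDS D i d hρ
      have hprojl : PathPrefix S' (proj S' ρ ++ [Letter.lab l]) := by
        have := proj_pathPrefix hquot hndS hpath
        rwa [proj_append_label hlS'] at this
      have hρ₀l : PathPrefix S' (ρ₀ ++ [Letter.lab l]) :=
        reducible_pathPrefix hndS' hρ₀red hprojl
      have hρ₀lc : Consistent i d (ρ₀ ++ [Letter.lab l]) := consistent_snoc_label hρ₀pi.2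
      have hlenρ₀ : ρ₀.length ≤ (proj S' ρ).length := reducible_length hρ₀red
      have hcomp := consistent_comparable hρ₀l hρ₀lc hτpp hτc
      have hple : (ρ₀ ++ [Letter.lab l]).length ≤ τ.length := by
        rcases hcomp with h | h
        · exact h.length_le
        · rcases hlen with ⟨hterm, _⟩ | heq
          · obtain ⟨full, hfull, hpre⟩ := hρ₀l
            have heqτ : τ = full := paths_prefix_free hterm hfull (h.trans hpre)
            have := hpre.length_le
            rw [← heqτ] at this
            exact this
          · simp only [List.length_append, List.length_cons, List.length_nil]
            omega
      have hfinal : ρ₀ ++ [Letter.lab l] <+: τ := by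
        rcases hcomp with h | h
        · exact h
        · have : τ = ρ₀ ++ [Letter.lab l] :=
            List.IsPrefix.eq_of_length h (le_antisymm h.length_le hple)
          rw [this]
      exact hnone ⟨ρ₀, hfinal, hρ₀red, hρ₀V⟩
    · -- no bad τ → IsDS
      intro hne D i d hρ
      obtain ⟨τ, hτc, hτalt⟩ := progress i S' ((proj S' ρ).length + 1) d
      have hτpp : PathPrefix S' τ := by
        rcases hτalt with ⟨hP, _⟩ | ⟨hpp, _⟩
        · exact ⟨τ, hP, List.prefix_refl τ⟩
        · exact hpp
      have hcompat : Compatible S ρ S' τ := ⟨D, i, d, hρ, hτpp, hτc⟩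
      have hlen : (Paths S' τ ∧ τ.length < (proj S' ρ).length + 1) ∨
          τ.length = (proj S' ρ).length + 1 := by
        rcases hτalt with ⟨hP, hle⟩ | ⟨_, hl⟩
        · rcases lt_or_eq_of_le hle with hlt | heq
          · exact Or.inl ⟨hP, hlt⟩
          · exact Or.inr heq
        · exact Or.inr hl
      have hx : ¬¬∃ ρ' : List Letter, (ρ' ++ [Letter.lab l]) <+: τ ∧
          Reducible S' l (proj S' ρ) ρ' ∧ ∀ v ∈ V, hExec ρ' v = hExec ρ v :=
        fun hno => hne ⟨τ, hτpp, hcompat, hlen, hno⟩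
      obtain ⟨ρ', hpre, hred, hV⟩ := not_not.1 hx
      have hρ'τ : ρ' <+: τ := ((ρ'.prefix_append [Letter.lab l]).trans hpre)
      exact ⟨ρ', ⟨pathPrefix_of_prefix hτpp hρ'τ, consistent_prefix hρ'τ hτc⟩, hred, hV⟩
  · -- bound on reduced paths
    intro ρ' _ hred
    have := reducible_length hred
    simp only [List.length_append, List.length_cons, List.length_nil]
    omega

end SchemaSlicing
end

section
/- Consider the linear schema S given by: while p(w) { w := g(w); v := f(u); if q(w,t) then u := h(u); t := H(t); }, and the executable terminating path ρ = (⟨p,true⟩⟨g⟩⟨f⟩⟨q,true⟩⟨h⟩⟨H⟩)² ⟨p,false⟩, which passes twice through the body of p, each time through ⟨q,true⟩. Then (1) the only (ρ,{v})-path-faithful dynamic end slice of S is S itself, and (2) the quotient T obtained from S by deleting the assignment t := H(t); is a non-trivial (ρ,{v})-dynamic end slice of S. Hence a dynamic slice of a linear schema may be strictly smaller than every path-faithful dynamic slice. -/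
namespace SchemaSlicing

/- The schema of Figure 3 of the paper.
   Variables: w = 0, v = 1, u = 2, t = 3.
   Function symbols: g = 0, f = 1, h = 2, H = 3.
   Predicate symbols: p = 0, q = 1. -/

/-- Body of the while loop: w := g(w); v := f(u); if q(w,t) then u := h(u); t := H(t); -/
def figure3Body : Schema :=
  Schema.seq (Schema.assign 0 0 [0])
    (Schema.seq (Schema.assign 1 1 [2])
      (Schema.seq (Schema.ite 1 [0, 3] (Schema.assign 2 2 [2]) Schema.skip)
        (Schema.assign 3 3 [3])))

/-- S: while p(w) { w := g(w); v := f(u); if q(w,t) then u := h(u); t := H(t); } -/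
def figure3S : Schema := Schema.loop 0 [0] figure3Body

/-- The quotient T of S obtained by deleting the assignment t := H(t); -/
def figure3T : Schema :=
  Schema.loop 0 [0]
    (Schema.seq (Schema.assign 0 0 [0])
      (Schema.seq (Schema.assign 1 1 [2])
        (Schema.seq (Schema.ite 1 [0, 3] (Schema.assign 2 2 [2]) Schema.skip)
          Schema.skip)))

/-- One pass of ρ through the body: ⟨p,true⟩⟨g⟩⟨f⟩⟨q,true⟩⟨h⟩⟨H⟩ -/
def figure3Pass : List Letter :=
  [Letter.pred 0 [0] true, Letter.asgn 0 0 [0], Letter.asgn 1 1 [2],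
   Letter.pred 1 [0, 3] true, Letter.asgn 2 2 [2], Letter.asgn 3 3 [3]]

/-- ρ = (⟨p,true⟩⟨g⟩⟨f⟩⟨q,true⟩⟨h⟩⟨H⟩)² ⟨p,false⟩ -/
def figure3Rho : List Letter := figure3Pass ++ figure3Pass ++ [Letter.pred 0 [0] false]

/-! ### Auxiliary machinery -/

/-- A Herbrand-style distinguishing interpretation used as a witness. -/
def pfun : List Tm → Bool
  | [Tm.app 0 [Tm.app 0 [Tm.var 0]]] => false
  | _ => true

def qfun : List Tm → Bool
  | [Tm.app 0 [Tm.var 0], _] => true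
  | [_, Tm.app 3 [Tm.var 3]] => true
  | _ => false

def J : Interp Tm :=
  ⟨fun f ts => Tm.app f ts, fun p ts => if p = 0 then pfun ts else qfun ts⟩

/-- Executable consistency checker. -/
def ccheck {D : Type} (i : Interp D) (d : Var → D) : List Letter → Bool
  | [] => true
  | Letter.pred p xs Z :: rest =>
      (i.pn p (xs.map d) == Z) && ccheck i d rest
  | m :: rest => ccheck i (execLetter i d m) rest

lemma consistent_nil_iff {D : Type} (i : Interp D) (d : Var → D) :
    Consistent i d [] ↔ True := by
  simp only [iff_true]
  intro σ p xs Z h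
  have := h.length_le
  simp at this

lemma consistent_cons {D : Type} (i : Interp D) (d : Var → D) (m : Letter) (L : List Letter) :
    Consistent i d (m :: L) ↔
      ((∀ p xs Z, m = Letter.pred p xs Z → i.pn p (xs.map d) = Z) ∧
        Consistent i (execLetter i d m) L) := by
  constructor
  · intro h
    refine ⟨fun p xs Z hm => ?_, fun σ p xs Z hpre => ?_⟩
    · subst hm
      have := h [] p xs Z ⟨L, by simp⟩
      simpa [execWord] using this
    · have := h (m :: σ) p xs Z (by
        have : (m :: σ) ++ [Letter.pred p xs Z] = m :: (σ ++ [Letter.pred p xs Z]) := by simp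
        rw [this]
        exact (List.cons_prefix_cons).mpr ⟨rfl, hpre⟩)
      simpa [execWord] using this
  · rintro ⟨h1, h2⟩ σ p xs Z hpre
    cases σ with
    | nil =>
        have hpre' : Letter.pred p xs Z = m := by simpa using hpre
        have := h1 p xs Z hpre'.symm
        simpa [execWord] using this
    | cons a σ =>
        have hpre' : a = m ∧ (σ ++ [Letter.pred p xs Z]) <+: L := by simpa using hpre
        obtain ⟨rfl, hpre''⟩ := hpre'
        have := h2 σ p xs Z hpre''
        simpa [execWord] using this

lemma consistent_iff_ccheck {D : Type} (i : Interp D) :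
    ∀ (L : List Letter) (d : Var → D), Consistent i d L ↔ ccheck i d L = true := by
  intro L
  induction L with
  | nil => intro d; simp [ccheck, consistent_nil_iff]
  | cons m L ih =>
      intro d
      cases m with
      | lab l => simp [ccheck, consistent_cons, ih, execLetter]
      | asgn y f xs => simp [ccheck, consistent_cons, ih, execLetter]
      | pred p xs Z =>
          simp [ccheck, consistent_cons, ih, execLetter, and_comm]

/-- Path through the body of figure3S. -/
lemma pathBody :
    Paths figure3Body
      [Letter.asgn 0 0 [0], Letter.asgn 1 1 [2], Letter.pred 1 [0,3] true,
       Letter.asgn 2 2 [2], Letter.asgn 3 3 [3]] := by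
  have h : Paths figure3Body
      ([Letter.asgn 0 0 [0]] ++ ([Letter.asgn 1 1 [2]] ++
        ((Letter.pred 1 [0,3] true :: [Letter.asgn 2 2 [2]]) ++ [Letter.asgn 3 3 [3]]))) :=
    Paths.seq (Paths.assign 0 0 [0])
      (Paths.seq (Paths.assign 1 1 [2])
        (Paths.seq (Paths.iteTrue (Paths.assign 2 2 [2])) (Paths.assign 3 3 [3])))
  simpa using h

lemma pathS : Paths figure3S figure3Rho := by
  have h := Paths.loopTrue (q := 0) (xs := [0]) pathBody
    (Paths.loopTrue pathBody (Paths.loopFalse 0 [0] figure3Body))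
  have he : (Letter.pred 0 [0] true ::
      ([Letter.asgn 0 0 [0], Letter.asgn 1 1 [2], Letter.pred 1 [0,3] true,
        Letter.asgn 2 2 [2], Letter.asgn 3 3 [3]] ++
       (Letter.pred 0 [0] true ::
        ([Letter.asgn 0 0 [0], Letter.asgn 1 1 [2], Letter.pred 1 [0,3] true,
          Letter.asgn 2 2 [2], Letter.asgn 3 3 [3]] ++ [Letter.pred 0 [0] false]))))
      = figure3Rho := by decide
  rw [he] at h
  exact h

lemma consRho : Consistent J natState figure3Rho :=
  (consistent_iff_ccheck J figure3Rho natState).mpr (by decide)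

lemma hwit : PrefixOfPi J natState (Schema.seq figure3S (Schema.label 0)) figure3Rho :=
  ⟨⟨figure3Rho ++ [Letter.lab 0], Paths.seq pathS (Paths.label 0), ⟨[Letter.lab 0], rfl⟩⟩,
    consRho⟩


/-- The projection of ρ onto (T ; label 0). -/
def L1 : List Letter :=
  [Letter.pred 0 [0] true, Letter.asgn 0 0 [0], Letter.asgn 1 1 [2],
   Letter.pred 1 [0,3] true, Letter.asgn 2 2 [2],
   Letter.pred 0 [0] true, Letter.asgn 0 0 [0], Letter.asgn 1 1 [2],
   Letter.pred 1 [0,3] true, Letter.asgn 2 2 [2], Letter.pred 0 [0] false]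

/-- L1 after one simple 0-reduction (second q-branch removed). -/
def L2 : List Letter :=
  [Letter.pred 0 [0] true, Letter.asgn 0 0 [0], Letter.asgn 1 1 [2],
   Letter.pred 1 [0,3] true, Letter.asgn 2 2 [2],
   Letter.pred 0 [0] true, Letter.asgn 0 0 [0], Letter.asgn 1 1 [2],
   Letter.pred 1 [0,3] false, Letter.pred 0 [0] false]

lemma hprojT : proj (Schema.seq figure3T (Schema.label 0)) figure3Rho = L1 := by decide

def bodyT : Schema :=
  Schema.seq (Schema.assign 0 0 [0])
    (Schema.seq (Schema.assign 1 1 [2])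
      (Schema.seq (Schema.ite 1 [0, 3] (Schema.assign 2 2 [2]) Schema.skip)
        Schema.skip))

lemma pathBodyT1 :
    Paths bodyT
      [Letter.asgn 0 0 [0], Letter.asgn 1 1 [2], Letter.pred 1 [0,3] true,
       Letter.asgn 2 2 [2]] := by
  have h : Paths bodyT
      ([Letter.asgn 0 0 [0]] ++ ([Letter.asgn 1 1 [2]] ++
        ((Letter.pred 1 [0,3] true :: [Letter.asgn 2 2 [2]]) ++ []))) :=
    Paths.seq (Paths.assign 0 0 [0])
      (Paths.seq (Paths.assign 1 1 [2])
        (Paths.seq (Paths.iteTrue (Paths.assign 2 2 [2])) Paths.skip))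
  simpa using h

lemma pathBodyT2 :
    Paths bodyT
      [Letter.asgn 0 0 [0], Letter.asgn 1 1 [2], Letter.pred 1 [0,3] false] := by
  have h : Paths bodyT
      ([Letter.asgn 0 0 [0]] ++ ([Letter.asgn 1 1 [2]] ++
        ((Letter.pred 1 [0,3] false :: []) ++ []))) :=
    Paths.seq (Paths.assign 0 0 [0])
      (Paths.seq (Paths.assign 1 1 [2])
        (Paths.seq (Paths.iteFalse Paths.skip) Paths.skip))
  simpa using h

lemma pathT1 : Paths figure3T L1 := by
  have h := Paths.loopTrue (q := 0) (xs := [0]) pathBodyT1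
    (Paths.loopTrue pathBodyT1 (Paths.loopFalse 0 [0] bodyT))
  have he : (Letter.pred 0 [0] true ::
      ([Letter.asgn 0 0 [0], Letter.asgn 1 1 [2], Letter.pred 1 [0,3] true,
        Letter.asgn 2 2 [2]] ++
       (Letter.pred 0 [0] true ::
        ([Letter.asgn 0 0 [0], Letter.asgn 1 1 [2], Letter.pred 1 [0,3] true,
          Letter.asgn 2 2 [2]] ++ [Letter.pred 0 [0] false])))) = L1 := by decide
  rw [he] at h
  exact h

lemma pathT2 : Paths figure3T L2 := by
  have h := Paths.loopTrue (q := 0) (xs := [0]) pathBodyT1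
    (Paths.loopTrue pathBodyT2 (Paths.loopFalse 0 [0] bodyT))
  have he : (Letter.pred 0 [0] true ::
      ([Letter.asgn 0 0 [0], Letter.asgn 1 1 [2], Letter.pred 1 [0,3] true,
        Letter.asgn 2 2 [2]] ++
       (Letter.pred 0 [0] true ::
        ([Letter.asgn 0 0 [0], Letter.asgn 1 1 [2], Letter.pred 1 [0,3] false] ++
         [Letter.pred 0 [0] false])))) = L2 := by decide
  rw [he] at h
  exact h

lemma redStep : SimpleRed (Schema.seq figure3T (Schema.label 0)) 0 L1 L2 := by
  have hsub : Sub (Schema.ite 1 [0,3] (Schema.assign 2 2 [2]) Schema.skip)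
      (Schema.seq figure3T (Schema.label 0)) :=
    Sub.seqL (Sub.loop (Sub.seqR (Sub.seqR (Sub.seqL (Sub.refl _)))))
  have h := SimpleRed.iteRed (S := Schema.seq figure3T (Schema.label 0)) (l := 0)
    (p := 1) (xs := [0,3]) (S₁ := Schema.assign 2 2 [2]) (S₂ := Schema.skip) (Z := true)
    (α := [Letter.pred 0 [0] true, Letter.asgn 0 0 [0], Letter.asgn 1 1 [2],
           Letter.pred 1 [0,3] true, Letter.asgn 2 2 [2],
           Letter.pred 0 [0] true, Letter.asgn 0 0 [0], Letter.asgn 1 1 [2]])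
    (σ := [Letter.asgn 2 2 [2]]) (γ := [Letter.pred 0 [0] false])
    hsub (Paths.assign 2 2 [2]) rfl (by decide) (by decide)
  have e1 : ([Letter.pred 0 [0] true, Letter.asgn 0 0 [0], Letter.asgn 1 1 [2],
           Letter.pred 1 [0,3] true, Letter.asgn 2 2 [2],
           Letter.pred 0 [0] true, Letter.asgn 0 0 [0], Letter.asgn 1 1 [2]]
      ++ [Letter.pred 1 [0,3] true] ++ [Letter.asgn 2 2 [2]] ++ [Letter.pred 0 [0] false])
      = L1 := by decide
  have e2 : ([Letter.pred 0 [0] true, Letter.asgn 0 0 [0], Letter.asgn 1 1 [2],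
           Letter.pred 1 [0,3] true, Letter.asgn 2 2 [2],
           Letter.pred 0 [0] true, Letter.asgn 0 0 [0], Letter.asgn 1 1 [2]]
      ++ [Letter.pred 1 [0,3] (!true)] ++ [Letter.pred 0 [0] false])
      = L2 := by decide
  rw [e1, e2] at h
  exact h

/-- for the schema S of Figure 3 and the path ρ above (an executable
    terminating path through S), (1) the only (ρ,{v})-path-faithful dynamic end slice of S
    is S itself, while (2) the quotient T obtained by deleting t := H(t); is a non-trivial
    (ρ,{v})-dynamic end slice of S.  Hence a dynamic slice of a linear schema may be
    strictly smaller than every path-faithful dynamic slice. -/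

theorem statement_15 :
    figure3S.Linear ∧
    Paths figure3S figure3Rho ∧
    Executable figure3S figure3Rho ∧
    (∀ T', IsQuotient T' figure3S → IsPFDSEnd figure3S figure3Rho {1} T' →
      T' = figure3S) ∧
    (IsQuotient figure3T figure3S ∧ figure3T ≠ figure3S ∧
      IsDSEnd figure3S figure3Rho {1} figure3T) := by
  refine ⟨(by decide : List.Nodup figure3S.syms), pathS, ⟨Tm, J, natState, ⟨figure3Rho, pathS, List.prefix_refl _⟩, consRho⟩,
    ?_, ?_, ?_, ?_⟩
  · -- uniqueness of the path-faithful dynamic end slice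
    intro T' hq hp
    obtain ⟨ha, hb⟩ := hp
    have haa := ha 1 rfl
    unfold figure3S figure3Body at hq
    casesm* IsQuotient _ _
    all_goals first
      | rfl
      | (exact absurd
          ((consistent_iff_ccheck J _ _).mp (hb Tm J natState hwit).2) (by decide))
      | (simp [proj, figure3Rho, figure3Pass, hExec, execWord, execLetter, hInterp, natState,
          Schema.syms, Letter.sym, Function.update] at haa; done)
  · -- figure3T is a quotient of figure3S
    exact IsQuotient.loop (IsQuotient.seq (IsQuotient.refl _)
      (IsQuotient.seq (IsQuotient.refl _)
        (IsQuotient.seq (IsQuotient.refl _) (IsQuotient.skip _))))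
  · decide
  · -- T is a dynamic end slice
    rintro D i d ⟨hpath, hcons⟩
    have F1 := hcons [] 0 [0] true (by decide)
    have F2 := hcons [Letter.pred 0 [0] true, Letter.asgn 0 0 [0], Letter.asgn 1 1 [2]]
      1 [0,3] true (by decide)
    have F3 := hcons [Letter.pred 0 [0] true, Letter.asgn 0 0 [0], Letter.asgn 1 1 [2],
      Letter.pred 1 [0,3] true, Letter.asgn 2 2 [2], Letter.asgn 3 3 [3]]
      0 [0] true (by decide)
    have F4 := hcons [Letter.pred 0 [0] true, Letter.asgn 0 0 [0], Letter.asgn 1 1 [2],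
      Letter.pred 1 [0,3] true, Letter.asgn 2 2 [2], Letter.asgn 3 3 [3],
      Letter.pred 0 [0] true, Letter.asgn 0 0 [0], Letter.asgn 1 1 [2]]
      1 [0,3] true (by decide)
    have F5 := hcons [Letter.pred 0 [0] true, Letter.asgn 0 0 [0], Letter.asgn 1 1 [2],
      Letter.pred 1 [0,3] true, Letter.asgn 2 2 [2], Letter.asgn 3 3 [3],
      Letter.pred 0 [0] true, Letter.asgn 0 0 [0], Letter.asgn 1 1 [2],
      Letter.pred 1 [0,3] true, Letter.asgn 2 2 [2], Letter.asgn 3 3 [3]]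
      0 [0] false (by decide)
    simp only [execWord, execLetter, List.foldl, List.map] at F1 F2 F3 F4 F5
    simp only [Function.update_self, Function.update_of_ne (by decide : (0:ℕ) ≠ 1),
      Function.update_of_ne (by decide : (0:ℕ) ≠ 2), Function.update_of_ne (by decide : (0:ℕ) ≠ 3),
      Function.update_of_ne (by decide : (1:ℕ) ≠ 0), Function.update_of_ne (by decide : (1:ℕ) ≠ 2),
      Function.update_of_ne (by decide : (1:ℕ) ≠ 3), Function.update_of_ne (by decide : (2:ℕ) ≠ 0),
      Function.update_of_ne (by decide : (2:ℕ) ≠ 1), Function.update_of_ne (by decide : (2:ℕ) ≠ 3),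
      Function.update_of_ne (by decide : (3:ℕ) ≠ 0), Function.update_of_ne (by decide : (3:ℕ) ≠ 1),
      Function.update_of_ne (by decide : (3:ℕ) ≠ 2)] at F1 F2 F3 F4 F5
    by_cases hZ : i.pn 1 [i.fn 0 [i.fn 0 [d 0]], d 3] = true
    · refine ⟨L1, ⟨⟨L1 ++ [Letter.lab 0], Paths.seq pathT1 (Paths.label 0),
        ⟨[Letter.lab 0], rfl⟩⟩, ?_⟩, by rw [hprojT]; exact Relation.ReflTransGen.refl, ?_⟩
      · simp [L1, consistent_cons, consistent_nil_iff, execLetter, execWord]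
        exact ⟨F1, F2, F3, hZ, F5⟩
      · intro v hv
        simp only [Set.mem_singleton_iff] at hv
        subst hv
        rfl
    · have hZ' : i.pn 1 [i.fn 0 [i.fn 0 [d 0]], d 3] = false := by
        revert hZ; cases (i.pn 1 [i.fn 0 [i.fn 0 [d 0]], d 3]) <;> simp
      refine ⟨L2, ⟨⟨L2 ++ [Letter.lab 0], Paths.seq pathT2 (Paths.label 0),
        ⟨[Letter.lab 0], rfl⟩⟩, ?_⟩, by rw [hprojT]; exact Relation.ReflTransGen.single redStep,
        ?_⟩
      · simp [L2, consistent_cons, consistent_nil_iff, execLetter, execWord]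
        exact ⟨F1, F2, F3, hZ', F5⟩
      · intro v hv
        simp only [Set.mem_singleton_iff] at hv
        subst hv
        rfl

end SchemaSlicing
end
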